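/- arXiv:2207.06246 — 2 statements merged into one kernel-verified Lean document; each statement's English description precedes it below -/
import Mathlib

section
/- For every ε > 0 it holds that sup_{t ∈ [0,∞)} [ ‖Θ(t)‖ · 𝟙_{[ε,∞)}(|Θ₁(t)|) · 𝟙_{{1}}(μ(I^{Θ(t)})) ] < ∞, where μ denotes Lebesgue measure on ℝ; i.e., the gradient flow trajectory is bounded on the set of times t at which |Θ₁(t)| ≥ ε and the activity interval I^{Θ(t)} has Lebesgue measure 1. -/
open MeasureTheory Real Set
open scoped RealInnerProductSpace

/-- The mean value `f̄ = ∫₀¹ f(x) dx` of the target function. -/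
noncomputable def fbar (f : ℝ → ℝ) : ℝ := ∫ s in (0:ℝ)..1, f s

/-- `m(θ) = ∫₀¹ max{θ₁ s + θ₂, 0} ds`. -/
noncomputable def mfun (θ : EuclideanSpace ℝ (Fin 3)) : ℝ :=
  ∫ s in (0:ℝ)..1, max (θ 0 * s + θ 1) 0

/-- The risk function `𝓛`. -/
noncomputable def riskL (f : ℝ → ℝ) (θ : EuclideanSpace ℝ (Fin 3)) : ℝ :=
  ∫ s in (0:ℝ)..1, (θ 2 * (max (θ 0 * s + θ 1) 0 - mfun θ) + fbar f - f s) ^ 2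

/-- `g(θ) = θ₁² + θ₂²`; the manifold `ℳ` is `g⁻¹(1)`. -/
noncomputable def gfun (θ : EuclideanSpace ℝ (Fin 3)) : ℝ := θ 0 ^ 2 + θ 1 ^ 2

/-- The activity interval `I^θ = {s ∈ [0,1] : θ₁ s + θ₂ > 0}`. -/
def Iact (θ : EuclideanSpace ℝ (Fin 3)) : Set ℝ :=
  {s ∈ Set.Icc (0:ℝ) 1 | 0 < θ 0 * s + θ 1}

abbrev E3 := EuclideanSpace ℝ (Fin 3)

section Blocks
open Filter Metric
open scoped Topology NNReal ENNReal Interval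

lemma hasGradientAt_gfun (θ : E3) :
    HasGradientAt gfun (EuclideanSpace.single 0 (2 * θ 0) + EuclideanSpace.single 1 (2 * θ 1)) θ := by
  rw [hasGradientAt_iff_hasFDerivAt]
  have p0 : HasFDerivAt (fun x : E3 => x 0) (EuclideanSpace.proj (0 : Fin 3) : E3 →L[ℝ] ℝ) θ :=
    (EuclideanSpace.proj (0 : Fin 3) : E3 →L[ℝ] ℝ).hasFDerivAt
  have p1 : HasFDerivAt (fun x : E3 => x 1) (EuclideanSpace.proj (1 : Fin 3) : E3 →L[ℝ] ℝ) θ :=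
    (EuclideanSpace.proj (1 : Fin 3) : E3 →L[ℝ] ℝ).hasFDerivAt
  have h0 := (p0.mul p0).add (p1.mul p1)
  have hfun : gfun = (fun x : E3 => (fun x : E3 => x 0) x * (fun x : E3 => x 0) x
      + (fun x : E3 => x 1) x * (fun x : E3 => x 1) x) := by
    funext x; simp [gfun]; ring
  rw [hfun]
  refine h0.congr_fderiv ?_
  ext w
  simp [InnerProductSpace.toDual_apply_apply, inner_add_left, EuclideanSpace.inner_single_left]
  ring

lemma gradient_gfun (θ : E3) :
    gradient gfun θ = EuclideanSpace.single 0 (2 * θ 0) + EuclideanSpace.single 1 (2 * θ 1) := by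
  have h := hasGradientAt_gfun θ
  have : DifferentiableAt ℝ gfun θ := h.hasFDerivAt.differentiableAt
  exact (this.hasGradientAt.unique h)

lemma norm_sq_gradient_gfun (θ : E3) :
    ‖gradient gfun θ‖ ^ 2 = 4 * (θ 0 ^ 2 + θ 1 ^ 2) := by
  rw [gradient_gfun, ← real_inner_self_eq_norm_sq]
  rw [inner_add_left, inner_add_right, inner_add_right]
  simp [EuclideanSpace.inner_single_left, EuclideanSpace.single_apply]
  rw [mul_pow, mul_pow, sq_abs, sq_abs]
  ring

-- abstract algebra lemma for the projection
lemma proj_orth {F : Type*} [NormedAddCommGroup F] [InnerProductSpace ℝ F]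
    (A B G : F) (hB : ⟪B, B⟫ ≠ 0)
    (hG : G = A - ((‖B‖ ^ 2)⁻¹ * ⟪A, B⟫) • B) :
    ⟪A, G⟫ = ‖G‖ ^ 2 := by
  have hBn : ‖B‖ ^ 2 = ⟪B, B⟫ := (real_inner_self_eq_norm_sq B).symm
  have horth : ⟪G, B⟫ = 0 := by
    rw [hG, inner_sub_left, real_inner_smul_left, hBn]
    field_simp
    ring
  have : ⟪G, G⟫ = ⟪A, G⟫ := by
    nth_rewrite 1 [hG]
    rw [inner_sub_left, real_inner_smul_left]
    rw [show ⟪B, G⟫ = (0:ℝ) from (real_inner_comm G B).trans horth]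
    ring
  rw [← real_inner_self_eq_norm_sq, this]

lemma proj_orth' {F : Type*} [NormedAddCommGroup F] [InnerProductSpace ℝ F]
    (A B G : F) (hB : ⟪B, B⟫ ≠ 0)
    (hG : G = A - ((‖B‖ ^ 2)⁻¹ * ⟪A, B⟫) • B) :
    ⟪B, G⟫ = 0 := by
  have hBn : ‖B‖ ^ 2 = ⟪B, B⟫ := (real_inner_self_eq_norm_sq B).symm
  rw [hG, inner_sub_right, real_inner_smul_right, hBn, real_inner_comm A B]
  field_simp
  ring

section AEFTC

variable {h : ℝ → ℝ} {K : ℝ} {a b : ℝ}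

/-- If `h` is `K`-Lipschitz on `[a,b]` and has nonpositive derivative at every point of
`[a,b)` outside a null set `E`, then `h b ≤ h a`. -/
lemma le_of_ae_deriv_nonpos (hab : a ≤ b) (hK : 0 ≤ K)
    (hlip : ∀ x ∈ Icc a b, ∀ y ∈ Icc a b, |h y - h x| ≤ K * |y - x|)
    (E : Set ℝ) (hE : volume E = 0)
    (hd : ∀ t ∈ Ico a b, t ∉ E → ∃ d ≤ (0:ℝ), HasDerivAt h d t) :
    h b ≤ h a := by
  have hcont : ContinuousOn h (Icc a b) := by
    intro x hx
    rw [Metric.continuousWithinAt_iff]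
    intro δ hδ
    refine ⟨δ / (K + 1), by positivity, fun y hy hdy => ?_⟩
    have hl := hlip x hx y hy
    simp only [Real.dist_eq] at hdy ⊢
    calc |h y - h x| ≤ K * |y - x| := hl
      _ ≤ K * (δ / (K+1)) := mul_le_mul_of_nonneg_left (le_of_lt hdy) hK
      _ < δ := by
          have h1 : K * (δ / (K + 1)) < (K + 1) * (δ / (K + 1)) :=
            mul_lt_mul_of_pos_right (by linarith) (by positivity)
          have h2 : (K + 1) * (δ / (K + 1)) = δ := by field_simp
          linarith
  -- main estimate for each ε > 0
  have key : ∀ ε : ℝ, 0 < ε → h b - h a ≤ ε * (b - a) + (K + 1) * ε := by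
    intro ε hε
    obtain ⟨U, hUE, hUopen, hUlt⟩ :=
      Set.exists_isOpen_lt_of_lt E (ENNReal.ofReal ε) (by rw [hE]; exact ENNReal.ofReal_pos.2 hε)
    have hUfin : volume U < ⊤ := lt_of_lt_of_le hUlt le_top
    set φ : ℝ → ℝ := fun t => (volume (U ∩ Icc a t)).toReal with hφ
    have hfin : ∀ t, volume (U ∩ Icc a t) < ⊤ :=
      fun t => lt_of_le_of_lt (measure_mono inter_subset_left) hUfin
    have hφmono : ∀ ⦃s t : ℝ⦄, s ≤ t → φ s ≤ φ t := by
      intro s t hst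
      exact ENNReal.toReal_mono (hfin t).ne
        (measure_mono (inter_subset_inter_right _ (Icc_subset_Icc_right hst)))
    have hφlip : ∀ ⦃s t : ℝ⦄, s ≤ t → φ t ≤ φ s + (t - s) := by
      intro s t hst
      have hsub : U ∩ Icc a t ⊆ (U ∩ Icc a s) ∪ Ioc s t := by
        rintro x ⟨hxU, hxa, hxt⟩
        rcases le_or_gt x s with hxs | hxs
        · exact Or.inl ⟨hxU, hxa, hxs⟩
        · exact Or.inr ⟨hxs, hxt⟩
      have : volume (U ∩ Icc a t) ≤ volume (U ∩ Icc a s) + ENNReal.ofReal (t - s) := by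
        refine le_trans (measure_mono hsub) (le_trans (measure_union_le _ _) ?_)
        rw [Real.volume_Ioc]
      have h2 := ENNReal.toReal_mono (by
        refine ENNReal.add_ne_top.2 ⟨(hfin s).ne, ENNReal.ofReal_ne_top⟩) this
      rw [ENNReal.toReal_add (hfin s).ne ENNReal.ofReal_ne_top,
        ENNReal.toReal_ofReal (by linarith)] at h2
      exact h2
    have hφcont : Continuous φ := by
      rw [Metric.continuous_iff]
      intro t δ hδ
      refine ⟨δ, hδ, fun s hs => ?_⟩
      rw [Real.dist_eq] at *
      rcases le_total s t with hst | hst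
      · have h1 := hφmono hst
        have h2 := hφlip hst
        rw [abs_sub_lt_iff]
        constructor <;> [linarith; (rw [abs_sub_lt_iff] at hs; rcases hs with ⟨_,_⟩; linarith)]
      · have h1 := hφmono hst
        have h2 := hφlip hst
        rw [abs_sub_lt_iff]
        constructor <;> [(rw [abs_sub_lt_iff] at hs; rcases hs with ⟨_,_⟩; linarith); linarith]
    have hφa : φ a = 0 := by
      have : volume (U ∩ Icc a a) ≤ volume (Icc a a) := measure_mono inter_subset_right
      rw [Icc_self] at this
      simp only [Real.volume_singleton, nonpos_iff_eq_zero] at this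
      simp [hφ, this]
    set ψ : ℝ → ℝ := fun t => h t - h a - ε * (t - a) - (K + 1) * φ t with hψ
    have hψcont : ContinuousOn ψ (Icc a b) :=
      ((hcont.sub continuousOn_const).sub
        ((continuous_const.mul (continuous_id.sub continuous_const)).continuousOn)).sub
        ((continuous_const.mul hφcont).continuousOn)
    set S : Set ℝ := {t ∈ Icc a b | ∀ s ∈ Icc a t, ψ s ≤ 0} with hS
    have haS : a ∈ S := by
      refine ⟨⟨le_refl a, hab⟩, fun s hs => ?_⟩
      have : s = a := le_antisymm hs.2 hs.1
      simp [this, hψ, hφa]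
    have hSne : S.Nonempty := ⟨a, haS⟩
    have hSbdd : BddAbove S := ⟨b, fun t ht => ht.1.2⟩
    set c := sSup S with hc
    have hac : a ≤ c := le_csSup hSbdd haS
    have hcb : c ≤ b := csSup_le hSne (fun t ht => ht.1.2)
    have hcIcc : c ∈ Icc a b := ⟨hac, hcb⟩
    -- ψ ≤ 0 on [a, c]
    have hψc : ∀ s ∈ Icc a c, ψ s ≤ 0 := by
      intro s hs
      rcases eq_or_lt_of_le hs.2 with hsc | hsc
      · -- s = c : use continuity from the left or s = a
        subst hsc
        rcases eq_or_lt_of_le hs.1 with hsa | hsa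
        · rw [← hsa]; exact haS.2 a ⟨le_refl a, le_refl a⟩
        · -- limit of ψ along points < c in S-closure
          have hlim : ContinuousWithinAt ψ (Ico a c) c :=
            (hψcont c hcIcc).mono (fun y hy => ⟨hy.1, le_trans hy.2.le hcb⟩)
          have hne : (𝓝[Ico a c] c).NeBot := by
            rw [← mem_closure_iff_nhdsWithin_neBot]
            rw [closure_Ico (ne_of_lt hsa)]
            exact ⟨hac, le_refl c⟩
          refine le_of_tendsto hlim.tendsto ?_
          filter_upwards [self_mem_nhdsWithin] with y hy
          obtain ⟨t, htS, hyt⟩ := exists_lt_of_lt_csSup hSne hy.2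
          exact htS.2 y ⟨hy.1, hyt.le⟩
      · obtain ⟨t, htS, hst⟩ := exists_lt_of_lt_csSup hSne hsc
        exact htS.2 s ⟨hs.1, hst.le⟩
    -- show c = b
    have hcbEq : c = b := by
      by_contra hne
      have hclt : c < b := lt_of_le_of_ne hcb hne
      -- we produce t' ∈ S with c < t', contradiction
      suffices hsuff : ∃ t', c < t' ∧ t' ∈ S by
        obtain ⟨t', h1, h2⟩ := hsuff
        exact absurd (le_csSup hSbdd h2) (not_le.2 h1)
      have hext : ∀ η > 0, (∀ s ∈ Ioc c (min (c + η) b), ψ s ≤ ψ c) →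
          ∃ t', c < t' ∧ t' ∈ S := by
        intro η hη hbound
        refine ⟨min (c + η) b, lt_min (by linarith) hclt, ⟨⟨le_min (by linarith) hab, min_le_right _ _⟩, ?_⟩⟩
        intro s hs
        rcases le_or_gt s c with hsc | hsc
        · exact hψc s ⟨hs.1, hsc⟩
        · have := hbound s ⟨hsc, hs.2⟩
          have hψc0 : ψ c ≤ 0 := hψc c ⟨hac, le_refl c⟩
          linarith
      by_cases hcE : c ∈ E
      · -- c in the open set U
        obtain ⟨η, hη, hball⟩ := Metric.isOpen_iff.1 hUopen c (hUE hcE)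
        refine hext (η/2) (by positivity) ?_
        intro s hs
        have hsc : c < s := hs.1
        have hsb : s ≤ b := le_trans hs.2 (min_le_right _ _)
        have hscb : s ≤ c + η/2 := le_trans hs.2 (min_le_left _ _)
        -- φ s ≥ φ c + (s - c)
        have hIoc : Ioc c s ⊆ U ∩ Icc a s := by
          intro x hx
          refine ⟨hball ?_, le_trans hac hx.1.le, hx.2⟩
          rw [Metric.mem_ball, Real.dist_eq, abs_of_pos (by linarith [hx.1] : (0:ℝ) < x - c)]
          linarith [hx.2]
        have hunion : (U ∩ Icc a c) ∪ Ioc c s ⊆ U ∩ Icc a s := by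
          refine union_subset (inter_subset_inter_right _ (Icc_subset_Icc_right hsc.le)) hIoc
        have hdisj : Disjoint (U ∩ Icc a c) (Ioc c s) := by
          refine Set.disjoint_left.2 ?_
          rintro x ⟨_, _, hxc⟩ hx2
          exact absurd hxc (not_le.2 hx2.1)
        have hmeas := measure_union (μ := volume) hdisj measurableSet_Ioc
        have hle : volume (U ∩ Icc a c) + ENNReal.ofReal (s - c) ≤ volume (U ∩ Icc a s) := by
          rw [← Real.volume_Ioc, ← hmeas]
          exact measure_mono hunion
        have hle' := ENNReal.toReal_mono (hfin s).ne hle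
        rw [ENNReal.toReal_add (hfin c).ne ENNReal.ofReal_ne_top,
          ENNReal.toReal_ofReal (by linarith)] at hle'
        -- h s - h c ≤ K (s - c)
        have hh := hlip c hcIcc s ⟨le_trans hac hsc.le, hsb⟩
        rw [abs_of_pos (by linarith : (0:ℝ) < s - c)] at hh
        have hh' : h s - h c ≤ K * (s - c) := le_trans (le_abs_self _) hh
        simp only [hψ]
        have : (K+1) * φ c + (K+1) * (s - c) ≤ (K+1) * φ s := by nlinarith
        nlinarith
      · -- c not in E : use the derivative
        obtain ⟨d, hd0, hD⟩ := hd c ⟨hac, hclt⟩ hcE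
        have hslope : Tendsto (slope h c) (𝓝[>] c) (𝓝 d) :=
          ((hasDerivAt_iff_tendsto_slope).1 hD).mono_left
            (nhdsWithin_mono c (fun x hx => ne_of_gt hx))
        have hev : ∀ᶠ s in 𝓝[>] c, slope h c s < ε :=
          hslope.eventually_lt_const (by linarith)
        rw [eventually_nhdsWithin_iff] at hev
        obtain ⟨η, hη, hball⟩ := Metric.eventually_nhds_iff.1 hev
        refine hext (η/2) (by positivity) ?_
        intro s hs
        have hsc : c < s := hs.1
        have hscb : s ≤ c + η/2 := le_trans hs.2 (min_le_left _ _)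
        have hsl := hball (y := s) (by
          rw [Real.dist_eq, abs_of_pos (by linarith : (0:ℝ) < s - c)]; linarith) hsc
        rw [slope_def_field, div_lt_iff₀ (by linarith : (0:ℝ) < s - c)] at hsl
        have hφm : φ c ≤ φ s := hφmono hsc.le
        simp only [hψ]
        nlinarith
    -- conclude
    have hψb : ψ b ≤ 0 := hcbEq ▸ hψc c ⟨hac, le_refl c⟩
    have hφb : φ b ≤ ε := by
      have h1 : volume (U ∩ Icc a b) ≤ ENNReal.ofReal ε :=
        le_trans (measure_mono inter_subset_left) hUlt.le
      have := ENNReal.toReal_mono ENNReal.ofReal_ne_top h1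
      rwa [ENNReal.toReal_ofReal hε.le] at this
    simp only [hψ] at hψb
    nlinarith
  -- let ε → 0
  by_contra hcon
  push_neg at hcon
  have hx0 : 0 < h b - h a := by linarith
  have hden : 0 < (b - a) + (K + 1) := by linarith
  set ε := (h b - h a) / (2 * ((b - a) + (K + 1))) with hεdef
  have hε : 0 < ε := div_pos hx0 (by linarith)
  have hk := key ε hε
  have he1 : ε * (b - a) + (K + 1) * ε = ε * ((b - a) + (K + 1)) := by ring
  rw [he1] at hk
  have he2 : ε * ((b - a) + (K + 1)) = (h b - h a) / 2 := by
    rw [hεdef]; field_simp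
  linarith

end AEFTC

lemma coord_le_norm (θ : E3) (i : Fin 3) : |θ i| ≤ ‖θ‖ := by
  rw [EuclideanSpace.norm_eq, ← Real.sqrt_sq_eq_abs]
  apply Real.sqrt_le_sqrt
  have := Finset.single_le_sum (f := fun j => ‖θ j‖ ^ 2) (fun j _ => sq_nonneg _)
    (Finset.mem_univ i)
  simpa [Real.norm_eq_abs, sq_abs] using this

lemma coord_sub_le_norm (θ θ' : E3) (i : Fin 3) : |θ i - θ' i| ≤ ‖θ - θ'‖ := by
  have := coord_le_norm (θ - θ') i
  simpa using this

lemma abs_max_le (x : ℝ) : |max x 0| ≤ |x| := by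
  rw [abs_of_nonneg (le_max_right x 0)]
  exact max_le (le_abs_self x) (abs_nonneg x)

lemma relu_bound (θ : E3) {s : ℝ} (hs : s ∈ Icc (0:ℝ) 1) :
    |max (θ 0 * s + θ 1) 0| ≤ 2 * ‖θ‖ := by
  refine le_trans (abs_max_le _) (le_trans (abs_add_le _ _) ?_)
  have h0 : |θ 0 * s| ≤ |θ 0| := by
    rw [abs_mul]
    calc |θ 0| * |s| ≤ |θ 0| * 1 := by
          apply mul_le_mul_of_nonneg_left _ (abs_nonneg _)
          rw [abs_of_nonneg hs.1]; exact hs.2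
      _ = |θ 0| := mul_one _
  have := coord_le_norm θ 0
  have := coord_le_norm θ 1
  linarith

lemma relu_sub_bound (θ θ' : E3) {s : ℝ} (hs : s ∈ Icc (0:ℝ) 1) :
    |max (θ 0 * s + θ 1) 0 - max (θ' 0 * s + θ' 1) 0| ≤ 2 * ‖θ - θ'‖ := by
  refine le_trans (abs_max_sub_max_le_abs _ _ _) ?_
  have h1 : θ 0 * s + θ 1 - (θ' 0 * s + θ' 1) = (θ 0 - θ' 0) * s + (θ 1 - θ' 1) := by ring
  rw [h1]
  refine le_trans (abs_add_le _ _) ?_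
  have h0 : |(θ 0 - θ' 0) * s| ≤ |θ 0 - θ' 0| := by
    rw [abs_mul]
    calc |θ 0 - θ' 0| * |s| ≤ |θ 0 - θ' 0| * 1 := by
          apply mul_le_mul_of_nonneg_left _ (abs_nonneg _)
          rw [abs_of_nonneg hs.1]; exact hs.2
      _ = _ := mul_one _
  have := coord_sub_le_norm θ θ' 0
  have := coord_sub_le_norm θ θ' 1
  linarith

lemma relu_intervalIntegrable (θ : E3) :
    IntervalIntegrable (fun s => max (θ 0 * s + θ 1) 0) volume 0 1 :=
  (((continuous_const.mul continuous_id).add continuous_const).max continuous_const).intervalIntegrable _ _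

lemma mfun_bound (θ : E3) : |mfun θ| ≤ 2 * ‖θ‖ := by
  have := intervalIntegral.norm_integral_le_of_norm_le_const
    (C := 2 * ‖θ‖) (f := fun s => max (θ 0 * s + θ 1) 0) (a := (0:ℝ)) (b := 1) ?_
  · simpa [mfun] using this
  · intro x hx
    rw [uIoc_of_le zero_le_one] at hx
    exact relu_bound θ ⟨hx.1.le, hx.2⟩

lemma mfun_sub_bound (θ θ' : E3) : |mfun θ - mfun θ'| ≤ 2 * ‖θ - θ'‖ := by
  have hsub : mfun θ - mfun θ' =
      ∫ s in (0:ℝ)..1, (max (θ 0 * s + θ 1) 0 - max (θ' 0 * s + θ' 1) 0) :=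
    (intervalIntegral.integral_sub (relu_intervalIntegrable θ) (relu_intervalIntegrable θ')).symm
  rw [hsub]
  have := intervalIntegral.norm_integral_le_of_norm_le_const
    (C := 2 * ‖θ - θ'‖) (f := fun s => max (θ 0 * s + θ 1) 0 - max (θ' 0 * s + θ' 1) 0)
    (a := (0:ℝ)) (b := 1) ?_
  · simpa using this
  · intro x hx
    rw [uIoc_of_le zero_le_one] at hx
    exact relu_sub_bound θ θ' ⟨hx.1.le, hx.2⟩

section WithF
variable {f : ℝ → ℝ} (hf : ContinuousOn f (Icc 0 1))

lemma riskL_integrand_cont (hf : ContinuousOn f (Icc 0 1)) (θ : E3) :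
    ContinuousOn (fun s => (θ 2 * (max (θ 0 * s + θ 1) 0 - mfun θ) + fbar f - f s) ^ 2)
      (Icc (0:ℝ) 1) := by
  apply ContinuousOn.pow
  apply ContinuousOn.sub _ hf
  exact ((continuous_const.mul ((((continuous_const.mul continuous_id).add
    continuous_const).max continuous_const).sub continuous_const)).add
    continuous_const).continuousOn

lemma riskL_integrand_integrable (hf : ContinuousOn f (Icc 0 1)) (θ : E3) :
    IntervalIntegrable (fun s => (θ 2 * (max (θ 0 * s + θ 1) 0 - mfun θ) + fbar f - f s) ^ 2)
      volume 0 1 := by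
  apply ContinuousOn.intervalIntegrable
  rw [uIcc_of_le zero_le_one]
  exact riskL_integrand_cont hf θ

lemma fbar_bound {Fb : ℝ} (hFb : ∀ s ∈ Icc (0:ℝ) 1, |f s| ≤ Fb) : |fbar f| ≤ Fb := by
  have := intervalIntegral.norm_integral_le_of_norm_le_const
    (C := Fb) (f := f) (a := (0:ℝ)) (b := 1) ?_
  · simpa [fbar] using this
  · intro x hx
    rw [uIoc_of_le zero_le_one] at hx
    exact hFb x ⟨hx.1.le, hx.2⟩

lemma riskL_lip (hf : ContinuousOn f (Icc 0 1)) {Fb : ℝ} (hFb : ∀ s ∈ Icc (0:ℝ) 1, |f s| ≤ Fb)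
    {R : ℝ} (hR : 1 ≤ R) {θ θ' : E3} (h1 : ‖θ‖ ≤ R) (h2 : ‖θ'‖ ≤ R) :
    |riskL f θ - riskL f θ'| ≤ 16 * R * (4 * R ^ 2 + 2 * Fb) * ‖θ - θ'‖ := by
  have hFb0 : 0 ≤ Fb := le_trans (abs_nonneg _) (hFb 0 ⟨le_refl _, zero_le_one⟩)
  set P : E3 → ℝ → ℝ := fun η s => η 2 * (max (η 0 * s + η 1) 0 - mfun η) + fbar f - f s with hP
  have hPb : ∀ (η : E3), ‖η‖ ≤ R → ∀ s ∈ Icc (0:ℝ) 1, |P η s| ≤ 4 * R ^ 2 + 2 * Fb := by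
    intro η hη s hs
    have hb1 := relu_bound η hs
    have hb2 := mfun_bound η
    have hb3 := fbar_bound hFb
    have hb4 := hFb s hs
    have hc2 := coord_le_norm η 2
    have : |P η s| ≤ |η 2| * (|max (η 0 * s + η 1) 0| + |mfun η|) + |fbar f| + |f s| := by
      simp only [hP]
      calc |η 2 * (max (η 0 * s + η 1) 0 - mfun η) + fbar f - f s|
          ≤ |η 2 * (max (η 0 * s + η 1) 0 - mfun η) + fbar f| + |f s| := abs_sub _ _
        _ ≤ |η 2 * (max (η 0 * s + η 1) 0 - mfun η)| + |fbar f| + |f s| := by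
            have := abs_add_le (η 2 * (max (η 0 * s + η 1) 0 - mfun η)) (fbar f)
            linarith
        _ ≤ |η 2| * (|max (η 0 * s + η 1) 0| + |mfun η|) + |fbar f| + |f s| := by
            rw [abs_mul]
            have := abs_sub (max (η 0 * s + η 1) 0) (mfun η)
            nlinarith [abs_nonneg (η 2)]
    have hn : 0 ≤ ‖η‖ := norm_nonneg _
    have h4 : |η 2| * (|max (η 0 * s + η 1) 0| + |mfun η|) ≤ ‖η‖ * (4 * ‖η‖) :=
      mul_le_mul hc2 (by linarith) (by positivity) hn
    nlinarith [h4, hη, hn]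
  have hPd : ∀ s ∈ Icc (0:ℝ) 1, |P θ s - P θ' s| ≤ 8 * R * ‖θ - θ'‖ := by
    intro s hs
    have key : P θ s - P θ' s =
        (θ 2 - θ' 2) * (max (θ 0 * s + θ 1) 0 - mfun θ)
        + θ' 2 * ((max (θ 0 * s + θ 1) 0 - max (θ' 0 * s + θ' 1) 0) - (mfun θ - mfun θ')) := by
      simp only [hP]; ring
    rw [key]
    have hb1 := relu_bound θ hs
    have hb2 := mfun_bound θ
    have hd1 := relu_sub_bound θ θ' hs
    have hd2 := mfun_sub_bound θ θ'
    have hc2 := coord_sub_le_norm θ θ' 2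
    have hc2' := coord_le_norm θ' 2
    have hnd : 0 ≤ ‖θ - θ'‖ := norm_nonneg _
    calc |(θ 2 - θ' 2) * (max (θ 0 * s + θ 1) 0 - mfun θ)
        + θ' 2 * ((max (θ 0 * s + θ 1) 0 - max (θ' 0 * s + θ' 1) 0) - (mfun θ - mfun θ'))|
        ≤ |θ 2 - θ' 2| * (|max (θ 0 * s + θ 1) 0| + |mfun θ|)
          + |θ' 2| * (|max (θ 0 * s + θ 1) 0 - max (θ' 0 * s + θ' 1) 0| + |mfun θ - mfun θ'|) := by
          refine le_trans (abs_add_le _ _) ?_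
          rw [abs_mul, abs_mul]
          have e1 := abs_sub (max (θ 0 * s + θ 1) 0) (mfun θ)
          have e2 := abs_sub (max (θ 0 * s + θ 1) 0 - max (θ' 0 * s + θ' 1) 0) (mfun θ - mfun θ')
          nlinarith [abs_nonneg (θ 2 - θ' 2), abs_nonneg (θ' 2)]
      _ ≤ 8 * R * ‖θ - θ'‖ := by
          have hR0 : (0:ℝ) ≤ R := by linarith
          have e3 : |θ 2 - θ' 2| * (|max (θ 0 * s + θ 1) 0| + |mfun θ|)
              ≤ ‖θ - θ'‖ * (4 * R) :=
            mul_le_mul hc2 (by nlinarith [norm_nonneg θ]) (by positivity) hnd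
          have e4 : |θ' 2| * (|max (θ 0 * s + θ 1) 0 - max (θ' 0 * s + θ' 1) 0|
              + |mfun θ - mfun θ'|) ≤ R * (4 * ‖θ - θ'‖) :=
            mul_le_mul (le_trans hc2' h2) (by linarith) (by positivity) hR0
          nlinarith [e3, e4]
  have hsub : riskL f θ - riskL f θ' = ∫ s in (0:ℝ)..1, ((P θ s)^2 - (P θ' s)^2) :=
    (intervalIntegral.integral_sub (riskL_integrand_integrable hf θ)
      (riskL_integrand_integrable hf θ')).symm
  rw [hsub]
  have := intervalIntegral.norm_integral_le_of_norm_le_const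
    (C := 16 * R * (4 * R ^ 2 + 2 * Fb) * ‖θ - θ'‖)
    (f := fun s => (P θ s)^2 - (P θ' s)^2) (a := (0:ℝ)) (b := 1) ?_
  · simpa using this
  · intro s hs
    rw [uIoc_of_le zero_le_one] at hs
    have hs' : s ∈ Icc (0:ℝ) 1 := ⟨hs.1.le, hs.2⟩
    have b1 := hPb θ h1 s hs'
    have b2 := hPb θ' h2 s hs'
    have b3 := hPd s hs'
    have hgoal : ((fun s => (P θ s)^2 - (P θ' s)^2) s) = (P θ s + P θ' s) * (P θ s - P θ' s) := by
      simp only []; ring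
    rw [Real.norm_eq_abs, show P θ s ^ 2 - P θ' s ^ 2 = _ from hgoal, abs_mul]
    calc |P θ s + P θ' s| * |P θ s - P θ' s|
        ≤ (2 * (4 * R ^ 2 + 2 * Fb)) * (8 * R * ‖θ - θ'‖) := by
          apply mul_le_mul _ b3 (abs_nonneg _) (by positivity)
          refine le_trans (abs_add_le _ _) (by linarith)
      _ = 16 * R * (4 * R ^ 2 + 2 * Fb) * ‖θ - θ'‖ := by ring
  
end WithF

lemma Iact_measurable (θ : E3) : MeasurableSet (Iact θ) := by
  have : Iact θ = Icc 0 1 ∩ {s : ℝ | 0 < θ 0 * s + θ 1} := by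
    ext s; simp [Iact, Set.mem_sep_iff]
  rw [this]
  exact measurableSet_Icc.inter
    (measurableSet_lt measurable_const ((measurable_const.mul measurable_id).add measurable_const))

lemma Iact_null_compl (θ : E3) (hvol : (volume (Iact θ)).toReal = 1) :
    volume (Icc (0:ℝ) 1 \ Iact θ) = 0 := by
  have hsub : Iact θ ⊆ Icc (0:ℝ) 1 := fun s hs => hs.1
  have hle : volume (Iact θ) ≤ volume (Icc (0:ℝ) 1) := measure_mono hsub
  rw [Real.volume_Icc] at hle
  simp only [sub_zero, ENNReal.ofReal_one] at hle
  have hfin : volume (Iact θ) ≠ ⊤ := by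
    intro h; rw [h] at hle; exact absurd hle (by simp)
  have h1 : volume (Iact θ) = 1 := by
    have := ENNReal.ofReal_toReal hfin
    rw [hvol] at this
    simp at this
    exact this.symm
  have := measure_diff hsub (Iact_measurable θ).nullMeasurableSet hfin
  rw [this, h1, Real.volume_Icc]
  simp

lemma relu_ae_eq (θ : E3) (hvol : (volume (Iact θ)).toReal = 1) :
    ∀ᵐ s, s ∈ Set.uIoc (0:ℝ) 1 → max (θ 0 * s + θ 1) 0 = θ 0 * s + θ 1 := by
  have hnull := Iact_null_compl θ hvol
  rw [uIoc_of_le zero_le_one, ae_iff]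
  refine measure_mono_null ?_ hnull
  intro s hs
  rw [Set.mem_setOf_eq, Classical.not_imp] at hs
  obtain ⟨hs1, hs2⟩ := hs
  exact ⟨⟨hs1.1.le, hs1.2⟩, fun hmem => hs2 (max_eq_left hmem.2.le)⟩

lemma mfun_eq (θ : E3) (hvol : (volume (Iact θ)).toReal = 1) :
    mfun θ = θ 0 / 2 + θ 1 := by
  have h1 : mfun θ = ∫ s in (0:ℝ)..1, (θ 0 * s + θ 1) :=
    intervalIntegral.integral_congr_ae (relu_ae_eq θ hvol)
  rw [h1]
  have h2 : ∫ s in (0:ℝ)..1, (θ 0 * s + θ 1)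
      = θ 0 * (∫ s in (0:ℝ)..1, s) + (∫ s in (0:ℝ)..1, (θ 1 : ℝ)) := by
    rw [← intervalIntegral.integral_const_mul, ← intervalIntegral.integral_add]
    · exact (continuous_const.mul continuous_id).intervalIntegrable _ _
    · exact continuous_const.intervalIntegrable _ _
  rw [h2]
  simp [integral_id]
  ring

lemma sq_quarter_integral : ∫ s in (0:ℝ)..1, (s - 1/2)^2 = 1/12 := by
  have h : ∀ s : ℝ, (s - 1/2)^2 = s^2 - s + 1/4 := fun s => by ring
  simp_rw [h]
  rw [intervalIntegral.integral_add, intervalIntegral.integral_sub]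
  · simp [integral_id]
    norm_num [integral_pow]
  · exact (continuous_pow 2).intervalIntegrable _ _
  · exact continuous_id.intervalIntegrable _ _
  · exact ((continuous_pow 2).sub continuous_id).intervalIntegrable _ _
  · exact continuous_const.intervalIntegrable _ _

lemma riskL_lower (f : ℝ → ℝ) (hf : ContinuousOn f (Icc 0 1)) (θ : E3)
    (hvol : (volume (Iact θ)).toReal = 1) :
    (θ 2)^2 * (θ 0)^2 / 24 - (∫ s in (0:ℝ)..1, (fbar f - f s)^2) ≤ riskL f θ := by
  have hm := mfun_eq θ hvol
  have hcongr : riskL f θ = ∫ s in (0:ℝ)..1, (θ 2 * θ 0 * (s - 1/2) + (fbar f - f s))^2 := by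
    unfold riskL
    apply intervalIntegral.integral_congr_ae
    filter_upwards [relu_ae_eq θ hvol] with s hs hmem
    rw [hs hmem, hm]
    ring
  rw [hcongr]
  have hcont1 : ContinuousOn (fun s => (θ 2 * θ 0 * (s - 1/2) + (fbar f - f s))^2) (Icc (0:ℝ) 1) := by
    apply ContinuousOn.pow
    exact ((continuous_const.mul (continuous_id.sub continuous_const)).continuousOn).add
      (continuousOn_const.sub hf)
  have hcont2 : ContinuousOn (fun s : ℝ => (θ 2 * θ 0)^2 * (s - 1/2)^2 / 2 - (fbar f - f s)^2)
      (Icc (0:ℝ) 1) := by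
    apply ContinuousOn.sub
    · exact ((continuous_const.mul ((continuous_id.sub continuous_const).pow 2)).div_const 2).continuousOn
    · exact (continuousOn_const.sub hf).pow 2
  have hint1 : IntervalIntegrable (fun s => (θ 2 * θ 0 * (s - 1/2) + (fbar f - f s))^2) volume 0 1 := by
    apply ContinuousOn.intervalIntegrable; rwa [uIcc_of_le zero_le_one]
  have hint2 : IntervalIntegrable (fun s : ℝ => (θ 2 * θ 0)^2 * (s - 1/2)^2 / 2 - (fbar f - f s)^2)
      volume 0 1 := by
    apply ContinuousOn.intervalIntegrable; rwa [uIcc_of_le zero_le_one]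
  have hmono : ∫ s in (0:ℝ)..1, ((θ 2 * θ 0)^2 * (s - 1/2)^2 / 2 - (fbar f - f s)^2)
      ≤ ∫ s in (0:ℝ)..1, (θ 2 * θ 0 * (s - 1/2) + (fbar f - f s))^2 := by
    apply intervalIntegral.integral_mono_on zero_le_one hint2 hint1
    intro s hs
    nlinarith [sq_nonneg (θ 2 * θ 0 * (s - 1/2) + 2 * (fbar f - f s))]
  have hsplit : ∫ s in (0:ℝ)..1, ((θ 2 * θ 0)^2 * (s - 1/2)^2 / 2 - (fbar f - f s)^2)
      = (θ 2 * θ 0)^2 / 24 - ∫ s in (0:ℝ)..1, (fbar f - f s)^2 := by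
    rw [intervalIntegral.integral_sub]
    · congr 1
      have : ∀ s : ℝ, (θ 2 * θ 0)^2 * (s - 1/2)^2 / 2 = ((θ 2 * θ 0)^2/2) * (s - 1/2)^2 := by
        intro s; ring
      simp_rw [this]
      rw [intervalIntegral.integral_const_mul, sq_quarter_integral]
      ring
    · exact (((continuous_const.mul ((continuous_id.sub continuous_const).pow 2)).div_const 2)).intervalIntegrable _ _
    · apply ContinuousOn.intervalIntegrable
      rw [uIcc_of_le zero_le_one]
      exact (continuousOn_const.sub hf).pow 2
  rw [hsplit] at hmono
  have he : (θ 2)^2 * (θ 0)^2 / 24 = (θ 2 * θ 0)^2 / 24 := by ring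
  rw [he]
  exact hmono

variable {E : Type*} [NormedAddCommGroup E] [NormedSpace ℝ E] [CompleteSpace E]

/-- Lebesgue differentiation for the primitive of a function integrable on `[0,T]`. -/
lemma ae_hasDerivAt_primitive (G : ℝ → E) {T : ℝ} (hT : 0 < T)
    (hInt : IntegrableOn G (Icc 0 T) volume) :
    ∀ᵐ x, x ∈ Ioo 0 T → HasDerivAt (fun t => ∫ u in (0:ℝ)..t, G u) (G x) x := by
  set G' : ℝ → E := (Icc 0 T).indicator G with hG'def
  have hG'i : Integrable G' volume := (integrable_indicator_iff measurableSet_Icc).2 hInt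
  have hloc : LocallyIntegrable G' volume := hG'i.locallyIntegrable
  filter_upwards [IsUnifLocDoublingMeasure.ae_tendsto_average_norm_sub (μ := volume) hloc 1] with x hx hxIoo
  have hxIcc : x ∈ Icc 0 T := ⟨hxIoo.1.le, hxIoo.2.le⟩
  have hG'x : G' x = G x := indicator_of_mem hxIcc G
  have hG'n : ∀ r : ℝ, IntegrableOn (fun u => ‖G' u - G' x‖) (closedBall x r) volume := by
    intro r
    have hc : IntegrableOn (fun _ : ℝ => G' x) (closedBall x r) volume :=
      integrableOn_const (by rw [Real.volume_closedBall]; exact ENNReal.ofReal_ne_top)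
    exact (hG'i.integrableOn.sub hc).norm
  have key : ∀ y, y ∈ Ioo 0 T → y ≠ x →
      ‖(∫ u in (0:ℝ)..y, G u) - (∫ u in (0:ℝ)..x, G u) - (y - x) • G x‖ ≤
        2 * |y - x| * ⨍ u in closedBall x |y - x|, ‖G' u - G' x‖ := by
    intro y hy hyx
    have hyIcc : y ∈ Icc 0 T := ⟨hy.1.le, hy.2.le⟩
    have hsubI : uIcc x y ⊆ Icc 0 T := uIcc_subset_Icc hxIcc hyIcc
    have hintxy : IntervalIntegrable G volume x y :=
      (hInt.mono_set hsubI).intervalIntegrable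
    have hint0y : IntervalIntegrable G volume 0 y :=
      (hInt.mono_set (by rw [uIcc_of_le hy.1.le]; exact Icc_subset_Icc_right hy.2.le)).intervalIntegrable
    have hint0x : IntervalIntegrable G volume 0 x :=
      (hInt.mono_set (by rw [uIcc_of_le hxIoo.1.le]; exact Icc_subset_Icc_right hxIoo.2.le)).intervalIntegrable
    have hsplit : (∫ u in (0:ℝ)..y, G u) - (∫ u in (0:ℝ)..x, G u) = ∫ u in x..y, G u :=
      intervalIntegral.integral_interval_sub_left hint0y hint0x
    have hconst : (y - x) • G x = ∫ _ in x..y, G x := (intervalIntegral.integral_const _).symm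
    rw [hsplit, hconst, ← intervalIntegral.integral_sub hintxy intervalIntegrable_const]
    have hIsub : Ι x y ⊆ Icc 0 T := fun u hu => hsubI (Set.Ioc_subset_Icc_self hu)
    have h1 : ‖∫ u in x..y, (G u - G x)‖ ≤ |∫ u in x..y, ‖G u - G x‖| :=
      intervalIntegral.norm_integral_le_abs_integral_norm
    have h2 : |∫ u in x..y, ‖G u - G x‖| = |∫ u in Ι x y, ‖G u - G x‖| :=
      intervalIntegral.abs_integral_eq_abs_integral_uIoc _
    have hcong : ∫ u in Ι x y, ‖G u - G x‖ = ∫ u in Ι x y, ‖G' u - G' x‖ := by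
      apply setIntegral_congr_fun measurableSet_uIoc
      intro u hu
      show ‖G u - G x‖ = ‖G' u - G' x‖
      rw [hG'def, indicator_of_mem (hIsub hu) G, indicator_of_mem hxIcc G]
    have habs : |∫ u in Ι x y, ‖G' u - G' x‖| = ∫ u in Ι x y, ‖G' u - G' x‖ :=
      abs_of_nonneg (setIntegral_nonneg measurableSet_uIoc (fun u _ => norm_nonneg _))
    have hcb : Ι x y ⊆ closedBall x |y - x| := by
      intro u hu
      rw [Set.mem_uIoc] at hu
      rw [mem_closedBall, Real.dist_eq]
      rcases hu with ⟨hu1, hu2⟩ | ⟨hu1, hu2⟩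
      · rw [abs_of_pos (by linarith)]
        exact le_trans (by linarith) (le_abs_self (y - x))
      · rw [abs_of_nonpos (by linarith)]
        exact le_trans (by linarith) (neg_le_abs (y - x))
    have hmono : ∫ u in Ι x y, ‖G' u - G' x‖ ≤ ∫ u in closedBall x |y - x|, ‖G' u - G' x‖ :=
      setIntegral_mono_set (hG'n |y - x|)
        (Eventually.of_forall fun u => norm_nonneg _) (HasSubset.Subset.eventuallyLE hcb)
    have hballpos : (0:ℝ) < |y - x| := abs_pos.2 (sub_ne_zero.2 hyx)
    have hvol : (volume (closedBall x |y - x|)).toReal = 2 * |y - x| := by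
      rw [Real.volume_closedBall]
      exact ENNReal.toReal_ofReal (by positivity)
    have havg : ∫ u in closedBall x |y - x|, ‖G' u - G' x‖
        = 2 * |y - x| * ⨍ u in closedBall x |y - x|, ‖G' u - G' x‖ := by
      rw [setAverage_eq, measureReal_def, hvol, smul_eq_mul]
      field_simp
    calc ‖∫ u in x..y, (G u - G x)‖ ≤ |∫ u in Ι x y, ‖G u - G x‖| := h2 ▸ h1
      _ = ∫ u in Ι x y, ‖G' u - G' x‖ := by rw [hcong] at *; exact habs
      _ ≤ ∫ u in closedBall x |y - x|, ‖G' u - G' x‖ := hmono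
      _ = 2 * |y - x| * ⨍ u in closedBall x |y - x|, ‖G' u - G' x‖ := havg
  -- conclude HasDerivAt
  rw [hasDerivAt_iff_isLittleO, Asymptotics.isLittleO_iff]
  intro c hc
  have hδ : Tendsto (fun y : ℝ => |y - x|) (𝓝[≠] x) (𝓝[>] 0) := by
    rw [tendsto_nhdsWithin_iff]
    constructor
    · have h : Continuous (fun y : ℝ => |y - x|) :=
        (continuous_id.sub continuous_const).abs
      have h2 := h.tendsto x
      simp only [sub_self, abs_zero] at h2
      exact h2.mono_left nhdsWithin_le_nhds
    · filter_upwards [self_mem_nhdsWithin] with y hy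
      exact abs_pos.2 (sub_ne_zero.2 hy)
  have hw : ∀ᶠ y in 𝓝[≠] x, x ∈ closedBall ((fun _ : ℝ => x) y) (1 * |y - x|) := by
    filter_upwards with y
    rw [mem_closedBall, dist_self]
    positivity
  have havgt := hx (fun _ : ℝ => x) (fun y => |y - x|) hδ hw
  have hsmall : ∀ᶠ y in 𝓝[≠] x, (⨍ u in closedBall x |y - x|, ‖G' u - G' x‖) < c / 2 :=
    havgt.eventually_lt_const (by positivity)
  have hIoo : ∀ᶠ y in 𝓝[≠] x, y ∈ Ioo 0 T :=
    (isOpen_Ioo.eventually_mem hxIoo).filter_mono nhdsWithin_le_nhds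
  have hfinal : ∀ᶠ y in 𝓝[≠] x,
      ‖(∫ u in (0:ℝ)..y, G u) - (∫ u in (0:ℝ)..x, G u) - (y - x) • G x‖ ≤ c * ‖y - x‖ := by
    filter_upwards [hsmall, hIoo, self_mem_nhdsWithin] with y h1 h2 h3
    refine le_trans (key y h2 h3) ?_
    rw [Real.norm_eq_abs]
    calc 2 * |y - x| * ⨍ u in closedBall x |y - x|, ‖G' u - G' x‖
        ≤ 2 * |y - x| * (c / 2) := by
          apply mul_le_mul_of_nonneg_left h1.le (by positivity)
      _ = c * |y - x| := by ring
  rw [eventually_nhdsWithin_iff] at hfinal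
  filter_upwards [hfinal] with y hy
  rcases eq_or_ne y x with h | h
  · subst h; simp
  · exact hy h

end Blocks

section MainHelpers
open Filter Metric
open scoped Topology

lemma gfun_continuous : Continuous gfun := by
  have h0 : Continuous fun θ : E3 => θ 0 :=
    (EuclideanSpace.proj (0 : Fin 3) : E3 →L[ℝ] ℝ).continuous
  have h1 : Continuous fun θ : E3 => θ 1 :=
    (EuclideanSpace.proj (1 : Fin 3) : E3 →L[ℝ] ℝ).continuous
  exact (h0.pow 2).add (h1.pow 2)

lemma gfun_diff_bound (x y : E3) : |gfun y - gfun x| ≤ 2 * (‖x‖ + ‖y‖) * ‖y - x‖ := by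
  have e : gfun y - gfun x = (y 0 + x 0) * (y 0 - x 0) + (y 1 + x 1) * (y 1 - x 1) := by
    simp only [gfun]; ring
  rw [e]
  have a0 : |y 0 + x 0| ≤ ‖x‖ + ‖y‖ :=
    le_trans (abs_add_le _ _) (by linarith [coord_le_norm y 0, coord_le_norm x 0])
  have a1 : |y 1 + x 1| ≤ ‖x‖ + ‖y‖ :=
    le_trans (abs_add_le _ _) (by linarith [coord_le_norm y 1, coord_le_norm x 1])
  have b0 : |y 0 - x 0| ≤ ‖y - x‖ := coord_sub_le_norm y x 0
  have b1 : |y 1 - x 1| ≤ ‖y - x‖ := coord_sub_le_norm y x 1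
  have hxy : (0:ℝ) ≤ ‖x‖ + ‖y‖ := by positivity
  have m0 : |y 0 + x 0| * |y 0 - x 0| ≤ (‖x‖ + ‖y‖) * ‖y - x‖ :=
    mul_le_mul a0 b0 (abs_nonneg _) hxy
  have m1 : |y 1 + x 1| * |y 1 - x 1| ≤ (‖x‖ + ‖y‖) * ‖y - x‖ :=
    mul_le_mul a1 b1 (abs_nonneg _) hxy
  calc |(y 0 + x 0) * (y 0 - x 0) + (y 1 + x 1) * (y 1 - x 1)|
      ≤ |y 0 + x 0| * |y 0 - x 0| + |y 1 + x 1| * |y 1 - x 1| := by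
        refine le_trans (abs_add_le _ _) ?_
        rw [abs_mul, abs_mul]
    _ ≤ 2 * (‖x‖ + ‖y‖) * ‖y - x‖ := by linarith

lemma gfun_ne_zero_abs {θ : E3} (h : gfun θ ≠ 0) : 0 < |θ 0| + |θ 1| := by
  by_contra hc
  push_neg at hc
  have h0 : θ 0 = 0 := abs_eq_zero.1 (le_antisymm (by linarith [abs_nonneg (θ 1)]) (abs_nonneg _))
  have h1 : θ 1 = 0 := abs_eq_zero.1 (le_antisymm (by linarith [abs_nonneg (θ 0)]) (abs_nonneg _))
  exact h (by simp [gfun, h0, h1])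

lemma inner_gradg_self (θ : E3) : ⟪gradient gfun θ, gradient gfun θ⟫ = 4 * gfun θ := by
  rw [real_inner_self_eq_norm_sq, norm_sq_gradient_gfun]
  simp only [gfun]

lemma hasGradientAt_comp_hasDerivAt {φ : E3 → ℝ} {v w : E3} {Θ : ℝ → E3} {x : ℝ}
    (hφ : HasGradientAt φ v (Θ x)) (hΘd : HasDerivAt Θ w x) :
    HasDerivAt (fun t => φ (Θ t)) ⟪v, w⟫ x := by
  have h := (hasGradientAt_iff_hasFDerivAt.1 hφ).comp_hasDerivAt x hΘd
  exact (by simpa [InnerProductSpace.toDual_apply_apply] using h : HasDerivAt (φ ∘ Θ) ⟪v, w⟫ x)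

end MainHelpers

section MainTheorem
open Filter Metric
open scoped Topology

/-- Lemma 3.6: the gradient flow trajectory is bounded on the set of times `t` at which
`|Θ₁(t)| ≥ ε` and the activity interval `I^{Θ(t)}` has full Lebesgue measure `1`. -/
theorem stmt10
    (f : ℝ → ℝ) (hf : ContinuousOn f (Set.Icc 0 1))
    (h𝓛diff : ∀ θ : EuclideanSpace ℝ (Fin 3), 0 < |θ 0| + |θ 1| →
      DifferentiableAt ℝ (riskL f) θ)
    (𝔊 : EuclideanSpace ℝ (Fin 3) → EuclideanSpace ℝ (Fin 3))
    (h𝔊meas : Measurable 𝔊)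
    (h𝔊loc : ∀ θ : EuclideanSpace ℝ (Fin 3),
      ∃ r > (0:ℝ), ∃ C : ℝ, ∀ x ∈ Metric.ball θ r, ‖𝔊 x‖ ≤ C)
    (h𝔊 : ∀ θ : EuclideanSpace ℝ (Fin 3), 0 < |θ 0| + |θ 1| →
      𝔊 θ = gradient (riskL f) θ -
        ((‖gradient gfun θ‖ ^ 2)⁻¹ * ⟪gradient (riskL f) θ, gradient gfun θ⟫) •
          gradient gfun θ)
    (Θ : ℝ → EuclideanSpace ℝ (Fin 3))
    (hΘ0 : gfun (Θ 0) = 1)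
    (hΘint : ∀ t : ℝ, 0 ≤ t → IntervalIntegrable (fun u => 𝔊 (Θ u)) volume 0 t)
    (hΘ : ∀ t : ℝ, 0 ≤ t → Θ t = Θ 0 - ∫ u in (0:ℝ)..t, 𝔊 (Θ u)) :
    ∀ ε : ℝ, 0 < ε → ∃ C : ℝ, ∀ t : ℝ, 0 ≤ t →
      ε ≤ |Θ t 0| → (volume (Iact (Θ t))).toReal = 1 → ‖Θ t‖ ≤ C := by
  -- bound for f
  obtain ⟨Fb, hFb'⟩ := isCompact_Icc.exists_bound_of_continuousOn hf
  have hFb : ∀ s ∈ Icc (0:ℝ) 1, |f s| ≤ Fb := fun s hs => by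
    simpa [Real.norm_eq_abs] using hFb' s hs
  -- integrability on [0,T]
  have hint : ∀ T : ℝ, 0 < T → IntegrableOn (fun u => 𝔊 (Θ u)) (Icc 0 T) volume := by
    intro T hT
    have := hΘint T hT.le
    rwa [intervalIntegrable_iff_integrableOn_Icc_of_le hT.le] at this
  -- continuity of the trajectory
  have hΘcont : ∀ T : ℝ, 0 < T → ContinuousOn Θ (Icc 0 T) := by
    intro T hT
    have hi : IntegrableOn (fun u => 𝔊 (Θ u)) (Set.uIcc 0 T) volume := by
      rw [uIcc_of_le hT.le]; exact hint T hT
    have hF := intervalIntegral.continuousOn_primitive_interval hi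
    rw [uIcc_of_le hT.le] at hF
    exact (continuousOn_const.sub hF).congr (fun t ht => hΘ t ht.1)
  -- boundedness of the trajectory and the vector field along it
  have hbound : ∀ T : ℝ, 0 < T → ∃ M R : ℝ, 0 ≤ M ∧ 1 ≤ R ∧
      (∀ u ∈ Icc (0:ℝ) T, ‖𝔊 (Θ u)‖ ≤ M) ∧ (∀ u ∈ Icc (0:ℝ) T, ‖Θ u‖ ≤ R) := by
    intro T hT
    have hcomp : IsCompact (Θ '' Icc 0 T) :=
      isCompact_Icc.image_of_continuousOn (hΘcont T hT)
    obtain ⟨R0, hR0⟩ := isCompact_Icc.exists_bound_of_continuousOn (hΘcont T hT)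
    choose r hr C hC using h𝔊loc
    obtain ⟨I, hIsub, hIcov⟩ := hcomp.elim_nhds_subcover (fun θ => Metric.ball θ (r θ))
      (fun θ _ => Metric.ball_mem_nhds θ (hr θ))
    have hIne : I.Nonempty := by
      by_contra hne
      rw [Finset.not_nonempty_iff_eq_empty] at hne
      have hmem : Θ 0 ∈ Θ '' Icc 0 T := ⟨0, ⟨le_refl 0, hT.le⟩, rfl⟩
      have := hIcov hmem
      simp [hne] at this
    refine ⟨max (I.sup' hIne C) 0, max R0 1, le_max_right _ _, le_max_right _ _, ?_, ?_⟩
    · intro u hu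
      have hmem : Θ u ∈ Θ '' Icc 0 T := ⟨u, hu, rfl⟩
      have hm := hIcov hmem
      rw [Set.mem_iUnion₂] at hm
      obtain ⟨θ0, hθ0I, hθball⟩ := hm
      exact le_trans (hC θ0 (Θ u) hθball)
        (le_trans (Finset.le_sup' C hθ0I) (le_max_left _ _))
    · intro u hu
      exact le_trans (hR0 u hu) (le_max_left _ _)
  -- Lipschitz bound for the trajectory
  have hΘlip : ∀ T : ℝ, 0 < T → ∀ M : ℝ, (∀ u ∈ Icc (0:ℝ) T, ‖𝔊 (Θ u)‖ ≤ M) →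
      ∀ x ∈ Icc (0:ℝ) T, ∀ y ∈ Icc (0:ℝ) T, ‖Θ y - Θ x‖ ≤ M * |y - x| := by
    intro T hT M hM x hx y hy
    have hintx : IntervalIntegrable (fun u => 𝔊 (Θ u)) volume 0 x :=
      ((hint T hT).mono_set
        (by rw [uIcc_of_le hx.1]; exact Icc_subset_Icc_right hx.2)).intervalIntegrable
    have hinty : IntervalIntegrable (fun u => 𝔊 (Θ u)) volume 0 y :=
      ((hint T hT).mono_set
        (by rw [uIcc_of_le hy.1]; exact Icc_subset_Icc_right hy.2)).intervalIntegrable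
    rw [hΘ y hy.1, hΘ x hx.1]
    have e : Θ 0 - (∫ u in (0:ℝ)..y, 𝔊 (Θ u)) - (Θ 0 - ∫ u in (0:ℝ)..x, 𝔊 (Θ u))
        = -((∫ u in (0:ℝ)..y, 𝔊 (Θ u)) - ∫ u in (0:ℝ)..x, 𝔊 (Θ u)) := by abel
    rw [e, norm_neg, intervalIntegral.integral_interval_sub_left hinty hintx]
    apply intervalIntegral.norm_integral_le_of_norm_le_const
    intro u hu
    exact hM u (uIcc_subset_Icc hx hy (Set.Ioc_subset_Icc_self hu))
  -- a.e. differentiability of the trajectory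
  have hader : ∀ T : ℝ, 0 < T → ∀ᵐ x, x ∈ Ioo (0:ℝ) T → HasDerivAt Θ (-(𝔊 (Θ x))) x := by
    intro T hT
    filter_upwards [ae_hasDerivAt_primitive (fun u => 𝔊 (Θ u)) hT (hint T hT)] with x hx hxIoo
    have h1 := (hasDerivAt_const x (Θ 0)).sub (hx hxIoo)
    rw [zero_sub] at h1
    apply h1.congr_of_eventuallyEq
    filter_upwards [Ioi_mem_nhds hxIoo.1] with t ht
    exact hΘ t ht.le
  -- the tangential derivative of gfun along the flow vanishes
  have hinner0 : ∀ u : ℝ, gfun (Θ u) ≠ 0 → HasDerivAt Θ (-(𝔊 (Θ u))) u →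
      HasDerivAt (fun t => gfun (Θ t)) 0 u := by
    intro u hne hΘd
    have hpos := gfun_ne_zero_abs hne
    have hch := hasGradientAt_comp_hasDerivAt (hasGradientAt_gfun (Θ u)) hΘd
    rw [← gradient_gfun (Θ u)] at hch
    have hB : ⟪gradient gfun (Θ u), gradient gfun (Θ u)⟫ ≠ 0 := by
      rw [inner_gradg_self]
      exact mul_ne_zero (by norm_num) hne
    have hz : ⟪gradient gfun (Θ u), -(𝔊 (Θ u))⟫ = 0 := by
      rw [inner_neg_right,
        proj_orth' (gradient (riskL f) (Θ u)) (gradient gfun (Θ u)) (𝔊 (Θ u)) hB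
          (h𝔊 (Θ u) hpos)]
      simp
    rwa [hz] at hch
  -- invariance of the sphere constraint
  have hinv : ∀ t : ℝ, 0 ≤ t → gfun (Θ t) = 1 := by
    intro T hT0
    rcases eq_or_lt_of_le hT0 with h0 | hTpos
    · rw [← h0]; exact hΘ0
    obtain ⟨M, R, hM0, hR1, hMb, hRb⟩ := hbound T hTpos
    have hΘlipT := hΘlip T hTpos M hMb
    have hhcont : ContinuousOn (fun t => gfun (Θ t)) (Icc 0 T) :=
      gfun_continuous.comp_continuousOn (hΘcont T hTpos)
    have hae := hader T hTpos
    rw [ae_iff] at hae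
    set E' : Set ℝ := {x : ℝ | ¬(x ∈ Ioo (0:ℝ) T → HasDerivAt Θ (-(𝔊 (Θ x))) x)} ∪ {0}
      with hE'def
    have hE' : volume E' = 0 := measure_union_null hae volume_singleton
    set S : Set ℝ := {t ∈ Icc (0:ℝ) T | ∀ s ∈ Icc (0:ℝ) t, gfun (Θ s) = 1} with hSdef
    have h0S : (0:ℝ) ∈ S := by
      refine ⟨⟨le_refl _, hTpos.le⟩, fun s hs => ?_⟩
      have : s = 0 := le_antisymm hs.2 hs.1
      rw [this]; exact hΘ0
    have hSne : S.Nonempty := ⟨0, h0S⟩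
    have hSbdd : BddAbove S := ⟨T, fun t ht => ht.1.2⟩
    set c := sSup S with hc
    have hac : (0:ℝ) ≤ c := le_csSup hSbdd h0S
    have hcb : c ≤ T := csSup_le hSne (fun t ht => ht.1.2)
    have hcIcc : c ∈ Icc (0:ℝ) T := ⟨hac, hcb⟩
    have hS1 : ∀ s ∈ Icc (0:ℝ) c, gfun (Θ s) = 1 := by
      intro s hs
      rcases eq_or_lt_of_le hs.2 with hsc | hsc
      · subst hsc
        rcases eq_or_lt_of_le hs.1 with hsa | hsa
        · rw [← hsa]; exact hΘ0
        · have hlim : ContinuousWithinAt (fun t => gfun (Θ t)) (Ico 0 c) c :=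
            (hhcont c hcIcc).mono (fun y hy => ⟨hy.1, le_trans hy.2.le hcb⟩)
          have hne : (𝓝[Ico (0:ℝ) c] c).NeBot := by
            rw [← mem_closure_iff_nhdsWithin_neBot, closure_Ico (ne_of_lt hsa)]
            exact ⟨hac, le_refl c⟩
          have ht2 : Tendsto (fun t => gfun (Θ t)) (𝓝[Ico (0:ℝ) c] c) (𝓝 1) := by
            apply Tendsto.congr' _ tendsto_const_nhds
            filter_upwards [self_mem_nhdsWithin] with y hy
            obtain ⟨t, htS, hyt⟩ := exists_lt_of_lt_csSup hSne hy.2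
            exact (htS.2 y ⟨hy.1, hyt.le⟩).symm
          exact tendsto_nhds_unique hlim.tendsto ht2
      · obtain ⟨t, htS, hst⟩ := exists_lt_of_lt_csSup hSne hsc
        exact htS.2 s ⟨hs.1, hst.le⟩
    have hceq : c = T := by
      by_contra hnec
      have hclt : c < T := lt_of_le_of_ne hcb hnec
      have hc1 : gfun (Θ c) = 1 := hS1 c ⟨hac, le_refl c⟩
      have hcw := hhcont c hcIcc
      rw [Metric.continuousWithinAt_iff] at hcw
      obtain ⟨η, hη, hcw⟩ := hcw (1/2) (by norm_num)
      set t' := min (c + η/2) T with ht'def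
      have hct' : c < t' := lt_min (by linarith) hclt
      have ht'T : t' ≤ T := min_le_right _ _
      have hhalf : ∀ s ∈ Icc c t', gfun (Θ s) ≠ 0 := by
        intro s hs
        have hsT : s ∈ Icc (0:ℝ) T := ⟨le_trans hac hs.1, le_trans hs.2 ht'T⟩
        have hsd : dist s c < η := by
          rw [Real.dist_eq, abs_of_nonneg (by linarith [hs.1])]
          have h2 := hs.2
          have h3 : t' ≤ c + η/2 := min_le_left _ _
          linarith
        have hd := hcw hsT hsd
        rw [Real.dist_eq, hc1] at hd
        intro hzero
        rw [hzero] at hd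
        rw [abs_of_nonpos (by norm_num)] at hd
        linarith
      have hmem : ∀ s ∈ Ioc c t', gfun (Θ s) = 1 := by
        intro s hs
        have hcs : c ≤ s := hs.1.le
        have hsubT : Icc c s ⊆ Icc (0:ℝ) T :=
          Icc_subset_Icc hac (le_trans hs.2 ht'T)
        have hR0 : (0:ℝ) ≤ R := by linarith
        have hK0 : (0:ℝ) ≤ 4 * R * M := by positivity
        have hlip2 : ∀ x ∈ Icc c s, ∀ y ∈ Icc c s,
            |gfun (Θ y) - gfun (Θ x)| ≤ (4 * R * M) * |y - x| := by
          intro x hx y hy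
          have hxT := hsubT hx
          have hyT := hsubT hy
          have e1 := gfun_diff_bound (Θ x) (Θ y)
          have e2 := hΘlipT x hxT y hyT
          have e3 : 2 * (‖Θ x‖ + ‖Θ y‖) ≤ 4 * R := by linarith [hRb x hxT, hRb y hyT]
          calc |gfun (Θ y) - gfun (Θ x)| ≤ 2 * (‖Θ x‖ + ‖Θ y‖) * ‖Θ y - Θ x‖ := e1
            _ ≤ (4 * R) * (M * |y - x|) :=
                mul_le_mul e3 e2 (norm_nonneg _) (by linarith)
            _ = (4 * R * M) * |y - x| := by ring
        have hDer : ∀ u ∈ Ico c s, u ∉ E' →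
            HasDerivAt (fun t => gfun (Θ t)) 0 u := by
          intro u hu huE
          have hu0 : u ≠ 0 := fun h0 => huE (Or.inr (by rw [h0]; rfl))
          have huE0 : u ∉ {x : ℝ | ¬(x ∈ Ioo (0:ℝ) T → HasDerivAt Θ (-(𝔊 (Θ x))) x)} :=
            fun h0 => huE (Or.inl h0)
          have huIoo : u ∈ Ioo (0:ℝ) T :=
            ⟨lt_of_le_of_ne (le_trans hac hu.1) (Ne.symm hu0),
              lt_of_lt_of_le hu.2 (le_trans hs.2 ht'T)⟩
          have hΘd : HasDerivAt Θ (-(𝔊 (Θ u))) u := by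
            by_contra hnd
            exact huE0 (fun himp => hnd (himp huIoo))
          exact hinner0 u (hhalf u ⟨hu.1, le_trans hu.2.le hs.2⟩) hΘd
        have hup := le_of_ae_deriv_nonpos (h := fun t => gfun (Θ t)) hcs hK0 hlip2 E' hE'
          (fun u hu huE => ⟨0, le_refl 0, hDer u hu huE⟩)
        have hdown := le_of_ae_deriv_nonpos (h := fun t => -(gfun (Θ t))) hcs hK0
          (by
            intro x hx y hy
            have e : -(gfun (Θ y)) - -(gfun (Θ x)) = -(gfun (Θ y) - gfun (Θ x)) := by ring
            rw [e, abs_neg]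
            exact hlip2 x hx y hy) E' hE'
          (fun u hu huE => ⟨0, le_refl 0, by have h := (hDer u hu huE).neg; rw [neg_zero] at h; exact h⟩)
        have hup' : gfun (Θ s) ≤ gfun (Θ c) := hup
        have hdown' : -(gfun (Θ s)) ≤ -(gfun (Θ c)) := hdown
        rw [hc1] at hup' hdown'
        linarith
      have ht'S : t' ∈ S := by
        refine ⟨⟨le_trans hac hct'.le, ht'T⟩, fun s hs => ?_⟩
        rcases le_or_gt s c with hsc | hsc
        · exact hS1 s ⟨hs.1, hsc⟩
        · exact hmem s ⟨hsc, hs.2⟩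
      exact absurd (le_csSup hSbdd ht'S) (not_le.2 hct')
    exact hS1 T ⟨hT0, by rw [hceq]⟩
  -- descent of the risk along the flow
  have hdesc : ∀ t : ℝ, 0 ≤ t → riskL f (Θ t) ≤ riskL f (Θ 0) := by
    intro T hT0
    rcases eq_or_lt_of_le hT0 with h0 | hTpos
    · rw [← h0]
    obtain ⟨M, R, hM0, hR1, hMb, hRb⟩ := hbound T hTpos
    have hΘlipT := hΘlip T hTpos M hMb
    have hFb0 : 0 ≤ Fb := le_trans (abs_nonneg _) (hFb 0 ⟨le_refl _, zero_le_one⟩)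
    have hae := hader T hTpos
    rw [ae_iff] at hae
    set E' : Set ℝ := {x : ℝ | ¬(x ∈ Ioo (0:ℝ) T → HasDerivAt Θ (-(𝔊 (Θ x))) x)} ∪ {0}
      with hE'def
    have hE' : volume E' = 0 := measure_union_null hae volume_singleton
    have hK0 : (0:ℝ) ≤ 16 * R * (4 * R ^ 2 + 2 * Fb) * M := by positivity
    apply le_of_ae_deriv_nonpos hTpos.le hK0 ?_ E' hE' ?_
    · intro x hx y hy
      calc |riskL f (Θ y) - riskL f (Θ x)|
          ≤ 16 * R * (4 * R ^ 2 + 2 * Fb) * ‖Θ y - Θ x‖ :=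
            riskL_lip hf hFb hR1 (hRb y hy) (hRb x hx)
        _ ≤ 16 * R * (4 * R ^ 2 + 2 * Fb) * (M * |y - x|) := by
            apply mul_le_mul_of_nonneg_left (hΘlipT x hx y hy) (by positivity)
        _ = 16 * R * (4 * R ^ 2 + 2 * Fb) * M * |y - x| := by ring
    · intro u hu huE
      have hu0 : u ≠ 0 := fun h0 => huE (Or.inr (by rw [h0]; rfl))
      have huE0 : u ∉ {x : ℝ | ¬(x ∈ Ioo (0:ℝ) T → HasDerivAt Θ (-(𝔊 (Θ x))) x)} :=
        fun h0 => huE (Or.inl h0)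
      have huIoo : u ∈ Ioo (0:ℝ) T :=
        ⟨lt_of_le_of_ne hu.1 (Ne.symm hu0), hu.2⟩
      have hΘd : HasDerivAt Θ (-(𝔊 (Θ u))) u := by
        by_contra hnd
        exact huE0 (fun himp => hnd (himp huIoo))
      have hg1 : gfun (Θ u) = 1 := hinv u hu.1
      have hpos : 0 < |Θ u 0| + |Θ u 1| :=
        gfun_ne_zero_abs (by rw [hg1]; exact one_ne_zero)
      have hB : ⟪gradient gfun (Θ u), gradient gfun (Θ u)⟫ ≠ 0 := by
        rw [inner_gradg_self, hg1]
        norm_num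
      have hch := hasGradientAt_comp_hasDerivAt
        ((h𝓛diff (Θ u) hpos).hasGradientAt) hΘd
      have hz : ⟪gradient (riskL f) (Θ u), -(𝔊 (Θ u))⟫ = -(‖𝔊 (Θ u)‖^2) := by
        rw [inner_neg_right,
          proj_orth (gradient (riskL f) (Θ u)) (gradient gfun (Θ u)) (𝔊 (Θ u)) hB
            (h𝔊 (Θ u) hpos)]
      rw [hz] at hch
      exact ⟨-(‖𝔊 (Θ u)‖^2), neg_nonpos.2 (sq_nonneg _), hch⟩
  -- final bound
  intro ε hε
  set cF := ∫ s in (0:ℝ)..1, (fbar f - f s)^2 with hcF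
  set D := 24 * (riskL f (Θ 0) + cF) / ε^2 with hD
  refine ⟨Real.sqrt (1 + max D 0), ?_⟩
  intro t ht hεt hvolt
  have hg1 : gfun (Θ t) = 1 := hinv t ht
  have hL : riskL f (Θ t) ≤ riskL f (Θ 0) := hdesc t ht
  have hlow := riskL_lower f hf (Θ t) hvolt
  have h1 : (Θ t 2)^2 * (Θ t 0)^2 / 24 ≤ riskL f (Θ 0) + cF := by
    rw [hcF]; linarith
  have hθ0 : ε^2 ≤ (Θ t 0)^2 := by
    nlinarith [hεt, hε.le, abs_nonneg (Θ t 0), sq_abs (Θ t 0)]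
  have hθ2 : (Θ t 2)^2 ≤ max D 0 := by
    have h2 : (Θ t 2)^2 * ε^2 ≤ 24 * (riskL f (Θ 0) + cF) := by
      nlinarith [sq_nonneg (Θ t 2), mul_nonneg (sq_nonneg (Θ t 2)) (by linarith : (0:ℝ) ≤ (Θ t 0)^2 - ε^2)]
    have h3 : (Θ t 2)^2 ≤ D := by
      rw [hD, le_div_iff₀ (by positivity)]
      linarith
    exact le_trans h3 (le_max_left _ _)
  have hnorm : ‖Θ t‖^2 = 1 + (Θ t 2)^2 := by
    rw [← real_inner_self_eq_norm_sq]
    rw [PiLp.inner_apply]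
    rw [Fin.sum_univ_three]
    simp only [RCLike.inner_apply, conj_trivial]
    have : Θ t 0 * Θ t 0 + Θ t 1 * Θ t 1 + Θ t 2 * Θ t 2
        = gfun (Θ t) + (Θ t 2)^2 := by simp only [gfun]; ring
    rw [this, hg1]
  calc ‖Θ t‖ = Real.sqrt (‖Θ t‖^2) := (Real.sqrt_sq (norm_nonneg _)).symm
    _ ≤ Real.sqrt (1 + max D 0) := Real.sqrt_le_sqrt (by rw [hnorm]; linarith)

end MainTheorem
end

section
/- Let θ = (θ₁,θ₂,θ₃) ∈ ℝ³ satisfy θ₁² + θ₂² = 1, q^θ ∈ (0,1), and θ₁ > 0. Then 𝔊₁(θ) = 2θ₃ ( (θ₁θ₂²θ₃/12)(1 − q^θ)²(7 + 2q^θ + 3(q^θ)²) + ∫_{q^θ}^1 (f̄ − f(s))(θ₂² s − θ₁θ₂) ds ) and 𝔊₃(θ) = 2θ₁²θ₃ (1 − q^θ)³ (1/12 + q^θ/4) + 2 ∫_{q^θ}^1 (f̄ − f(s)) max{θ₁s+θ₂,0} ds. -/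
open MeasureTheory Real Set
open scoped RealInnerProductSpace

set_option maxHeartbeats 4000000

/- ## Auxiliary definitions and lemmas -/

noncomputable def Mint (a b : ℝ) : ℝ := ∫ s in (0:ℝ)..1, max (a * s + b) 0
noncomputable def Sint (a b : ℝ) : ℝ := ∫ s in (0:ℝ)..1, (max (a * s + b) 0) ^ 2
noncomputable def Aint (f : ℝ → ℝ) (a b : ℝ) : ℝ :=
  ∫ s in (0:ℝ)..1, max (a * s + b) 0 * (fbar f - f s)
noncomputable def Cc (f : ℝ → ℝ) : ℝ := ∫ s in (0:ℝ)..1, (fbar f - f s) ^ 2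
noncomputable def gg0 (f : ℝ → ℝ) (q : ℝ) : ℝ := ∫ s in q..1, (fbar f - f s)
noncomputable def gg1 (f : ℝ → ℝ) (q : ℝ) : ℝ := ∫ s in q..1, s * (fbar f - f s)

lemma contB {f : ℝ → ℝ} (hf : ContinuousOn f (Set.Icc 0 1)) :
    ContinuousOn (fun s => fbar f - f s) (Set.Icc (0:ℝ) 1) := continuousOn_const.sub hf

lemma intsub {h : ℝ → ℝ} (hh : ContinuousOn h (Set.Icc 0 1)) {u v : ℝ}
    (hu : u ∈ Set.Icc (0:ℝ) 1) (hv : v ∈ Set.Icc (0:ℝ) 1) :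
    IntervalIntegrable h volume u v :=
  (hh.mono (Set.uIcc_subset_Icc hu hv)).intervalIntegrable

lemma hasDerivAt_gg0 {f : ℝ → ℝ} (hf : ContinuousOn f (Set.Icc 0 1)) {q : ℝ}
    (hq : q ∈ Set.Ioo (0:ℝ) 1) :
    HasDerivAt (gg0 f) (-(fbar f - f q)) q := by
  have hmem : Set.Icc (0:ℝ) 1 ∈ nhds q := Icc_mem_nhds hq.1 hq.2
  have hcont : ContinuousAt (fun s => fbar f - f s) q :=
    continuousAt_const.sub (hf.continuousAt hmem)
  have hint : IntervalIntegrable (fun s => fbar f - f s) volume q 1 :=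
    intsub (contB hf) ⟨hq.1.le, hq.2.le⟩ ⟨zero_le_one, le_refl 1⟩
  have hmeas : StronglyMeasurableAtFilter (fun s => fbar f - f s) (nhds q) :=
    ⟨Set.Ioo 0 1, Ioo_mem_nhds hq.1 hq.2,
      (((contB hf)).mono Set.Ioo_subset_Icc_self).aestronglyMeasurable measurableSet_Ioo⟩
  exact intervalIntegral.integral_hasDerivAt_left hint hmeas hcont

lemma hasDerivAt_gg1 {f : ℝ → ℝ} (hf : ContinuousOn f (Set.Icc 0 1)) {q : ℝ}
    (hq : q ∈ Set.Ioo (0:ℝ) 1) :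
    HasDerivAt (gg1 f) (-(q * (fbar f - f q))) q := by
  have hmem : Set.Icc (0:ℝ) 1 ∈ nhds q := Icc_mem_nhds hq.1 hq.2
  have hcont : ContinuousAt (fun s => s * (fbar f - f s)) q :=
    continuousAt_id.mul (continuousAt_const.sub (hf.continuousAt hmem))
  have hint : IntervalIntegrable (fun s => s * (fbar f - f s)) volume q 1 :=
    intsub (continuousOn_id.mul (contB hf)) ⟨hq.1.le, hq.2.le⟩ ⟨zero_le_one, le_refl 1⟩
  have hmeas : StronglyMeasurableAtFilter (fun s => s * (fbar f - f s)) (nhds q) :=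
    ⟨Set.Ioo 0 1, Ioo_mem_nhds hq.1 hq.2,
      ((continuousOn_id.mul (contB hf)).mono Set.Ioo_subset_Icc_self).aestronglyMeasurable
        measurableSet_Ioo⟩
  exact intervalIntegral.integral_hasDerivAt_left hint hmeas hcont

lemma riskL_eq (f : ℝ → ℝ) (hf : ContinuousOn f (Set.Icc 0 1)) (x : EuclideanSpace ℝ (Fin 3)) :
    riskL f x = (x 2)^2 * (Sint (x 0) (x 1) - (Mint (x 0) (x 1))^2)
      + 2*(x 2) * Aint f (x 0) (x 1) + Cc f := by
  have hI : Set.uIcc (0:ℝ) 1 = Set.Icc 0 1 := uIcc_of_le zero_le_one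
  set a := x 0 with hxa
  set b := x 1 with hxb
  set c := x 2 with hxc
  have hPc : Continuous (fun s : ℝ => max (a*s+b) 0) :=
    ((continuous_const.mul continuous_id).add continuous_const).max continuous_const
  have hB : ContinuousOn (fun s : ℝ => fbar f - f s) (Set.Icc 0 1) := continuousOn_const.sub hf
  have i1 : IntervalIntegrable (fun s : ℝ => (max (a*s+b) 0)^2) volume 0 1 :=
    (hPc.pow 2).intervalIntegrable _ _
  have i2 : IntervalIntegrable (fun s : ℝ => max (a*s+b) 0 * (fbar f - f s)) volume 0 1 :=
    ContinuousOn.intervalIntegrable (by rw [hI]; exact hPc.continuousOn.mul hB)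
  have i3 : IntervalIntegrable (fun s : ℝ => max (a*s+b) 0) volume 0 1 :=
    hPc.intervalIntegrable _ _
  have i4 : IntervalIntegrable (fun s : ℝ => fbar f - f s) volume 0 1 :=
    ContinuousOn.intervalIntegrable (by rw [hI]; exact hB)
  have i5 : IntervalIntegrable (fun s : ℝ => (fbar f - f s)^2) volume 0 1 :=
    ContinuousOn.intervalIntegrable (by rw [hI]; exact hB.pow 2)
  have hfint : IntervalIntegrable f volume 0 1 :=
    ContinuousOn.intervalIntegrable (by rw [hI]; exact hf)
  have hB0 : (∫ s in (0:ℝ)..1, (fbar f - f s)) = 0 := by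
    rw [intervalIntegral.integral_sub intervalIntegrable_const hfint,
      intervalIntegral.integral_const]
    simp [fbar]
  set m := Mint a b with hm
  have key : riskL f x = ∫ s in (0:ℝ)..1,
      (c^2 * (max (a*s+b) 0)^2 + ((2*c) * (max (a*s+b) 0 * (fbar f - f s))
        + ((-(2*c^2*m)) * (max (a*s+b) 0) + ((-(2*c*m)) * (fbar f - f s)
        + ((fbar f - f s)^2 + c^2*m^2))))) := by
    have hmf : mfun x = m := rfl
    unfold riskL
    rw [hmf]
    exact intervalIntegral.integral_congr (fun s _ => by ring)
  rw [key,
    intervalIntegral.integral_add (i1.const_mul _) ((i2.const_mul _).add ((i3.const_mul _).add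
      ((i4.const_mul _).add (i5.add intervalIntegrable_const)))),
    intervalIntegral.integral_add (i2.const_mul _) ((i3.const_mul _).add
      ((i4.const_mul _).add (i5.add intervalIntegrable_const))),
    intervalIntegral.integral_add (i3.const_mul _) ((i4.const_mul _).add
      (i5.add intervalIntegrable_const)),
    intervalIntegral.integral_add (i4.const_mul _) (i5.add intervalIntegrable_const),
    intervalIntegral.integral_add i5 intervalIntegrable_const,
    intervalIntegral.integral_const_mul, intervalIntegral.integral_const_mul,
    intervalIntegral.integral_const_mul, intervalIntegral.integral_const_mul,
    intervalIntegral.integral_const, hB0]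
  rw [show (∫ s in (0:ℝ)..1, (max (a*s+b) 0)^2) = Sint a b from rfl,
    show (∫ s in (0:ℝ)..1, max (a*s+b) 0 * (fbar f - f s)) = Aint f a b from rfl,
    show (∫ s in (0:ℝ)..1, max (a*s+b) 0) = Mint a b from rfl,
    show (∫ s in (0:ℝ)..1, (fbar f - f s)^2) = Cc f from rfl, ← hm]
  simp only [smul_eq_mul]
  ring

lemma Mint_eq {a b : ℝ} (ha : 0 < a) (h0 : 0 < -b/a) (h1 : -b/a < 1) :
    Mint a b = (a+b)^2/(2*a) := by
  set q := -b/a with hq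
  have haq : a * q = -b := by rw [hq]; field_simp; try ring
  have hb : b = -(q*a) := by rw [hq]; field_simp; try ring
  have hPc : Continuous (fun s : ℝ => max (a*s+b) 0) :=
    ((continuous_const.mul continuous_id).add continuous_const).max continuous_const
  have hsplit : (∫ s in (0:ℝ)..q, max (a*s+b) 0) + (∫ s in q..1, max (a*s+b) 0) = Mint a b :=
    intervalIntegral.integral_add_adjacent_intervals (hPc.intervalIntegrable _ _)
      (hPc.intervalIntegrable _ _)
  have h01 : (∫ s in (0:ℝ)..q, max (a*s+b) 0) = ∫ s in (0:ℝ)..q, (0:ℝ) := by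
    apply intervalIntegral.integral_congr
    intro s hs
    rw [uIcc_of_le h0.le] at hs
    have hle : a*s + b ≤ 0 := by
      nlinarith [mul_le_mul_of_nonneg_left hs.2 ha.le]
    simp [max_eq_right hle]
  have h02 : (∫ s in q..1, max (a*s+b) 0) = ∫ s in q..1, (a*s+b) := by
    apply intervalIntegral.integral_congr
    intro s hs
    rw [uIcc_of_le h1.le] at hs
    have hge : 0 ≤ a*s + b := by
      nlinarith [mul_le_mul_of_nonneg_left hs.1 ha.le]
    simp [max_eq_left hge]
  have c1 : Continuous (fun s : ℝ => a * s) := by fun_prop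
  have h03 : (∫ s in q..1, (a*s+b)) = a*((1^2-q^2)/2) + (1-q)*b := by
    rw [intervalIntegral.integral_add (c1.intervalIntegrable _ _) intervalIntegrable_const,
      intervalIntegral.integral_const_mul, integral_id, intervalIntegral.integral_const,
      smul_eq_mul]
    try ring
  rw [← hsplit, h01, h02, h03, hb]
  rw [intervalIntegral.integral_zero]
  field_simp
  ring

lemma Sint_eq {a b : ℝ} (ha : 0 < a) (h0 : 0 < -b/a) (h1 : -b/a < 1) :
    Sint a b = (a+b)^3/(3*a) := by
  set q := -b/a with hq
  have haq : a * q = -b := by rw [hq]; field_simp; try ring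
  have hb : b = -(q*a) := by rw [hq]; field_simp; try ring
  have hPc : Continuous (fun s : ℝ => (max (a*s+b) 0)^2) :=
    (((continuous_const.mul continuous_id).add continuous_const).max continuous_const).pow 2
  have hsplit : (∫ s in (0:ℝ)..q, (max (a*s+b) 0)^2) + (∫ s in q..1, (max (a*s+b) 0)^2)
      = Sint a b :=
    intervalIntegral.integral_add_adjacent_intervals (hPc.intervalIntegrable _ _)
      (hPc.intervalIntegrable _ _)
  have h01 : (∫ s in (0:ℝ)..q, (max (a*s+b) 0)^2) = ∫ s in (0:ℝ)..q, (0:ℝ) := by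
    apply intervalIntegral.integral_congr
    intro s hs
    rw [uIcc_of_le h0.le] at hs
    have hle : a*s + b ≤ 0 := by
      nlinarith [mul_le_mul_of_nonneg_left hs.2 ha.le]
    simp [max_eq_right hle]
  have h02 : (∫ s in q..1, (max (a*s+b) 0)^2)
      = ∫ s in q..1, (a^2*s^2 + ((2*a*b)*s + b^2)) := by
    apply intervalIntegral.integral_congr
    intro s hs
    rw [uIcc_of_le h1.le] at hs
    have hge : 0 ≤ a*s + b := by
      nlinarith [mul_le_mul_of_nonneg_left hs.1 ha.le]
    simp only [max_eq_left hge]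
    ring
  have h03 : (∫ s in q..1, (a^2*s^2 + ((2*a*b)*s + b^2)))
      = a^2*((1^3-q^3)/3) + ((2*a*b)*((1^2-q^2)/2) + (1-q)*b^2) := by
    have c1 : Continuous (fun s : ℝ => a^2 * s^2) := by fun_prop
    have c2 : Continuous (fun s : ℝ => 2*a*b*s + b^2) := by fun_prop
    have c3 : Continuous (fun s : ℝ => 2*a*b*s) := by fun_prop
    rw [intervalIntegral.integral_add (c1.intervalIntegrable _ _) (c2.intervalIntegrable _ _),
      intervalIntegral.integral_add (c3.intervalIntegrable _ _) intervalIntegrable_const,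
      intervalIntegral.integral_const_mul, intervalIntegral.integral_const_mul,
      integral_pow, integral_id, intervalIntegral.integral_const, smul_eq_mul]
    try push_cast
    try ring
  rw [← hsplit, h01, h02, h03, hb]
  rw [intervalIntegral.integral_zero]
  field_simp
  ring

lemma Aint_eq {f : ℝ → ℝ} (hf : ContinuousOn f (Set.Icc 0 1)) {a b : ℝ} (ha : 0 < a)
    (h0 : 0 < -b/a) (h1 : -b/a < 1) :
    Aint f a b = a * gg1 f (-b/a) + b * gg0 f (-b/a) := by
  set q := -b/a with hq
  have haq : a * q = -b := by rw [hq]; field_simp; try ring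
  have hqI : q ∈ Set.Icc (0:ℝ) 1 := ⟨h0.le, h1.le⟩
  have h0I : (0:ℝ) ∈ Set.Icc (0:ℝ) 1 := by norm_num
  have h1I : (1:ℝ) ∈ Set.Icc (0:ℝ) 1 := by norm_num
  have hB : ContinuousOn (fun s : ℝ => fbar f - f s) (Set.Icc 0 1) := continuousOn_const.sub hf
  have hPc : Continuous (fun s : ℝ => max (a*s+b) 0) :=
    ((continuous_const.mul continuous_id).add continuous_const).max continuous_const
  have hPB : ContinuousOn (fun s : ℝ => max (a*s+b) 0 * (fbar f - f s)) (Set.Icc 0 1) :=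
    hPc.continuousOn.mul hB
  have hsplit : (∫ s in (0:ℝ)..q, max (a*s+b) 0 * (fbar f - f s))
      + (∫ s in q..1, max (a*s+b) 0 * (fbar f - f s)) = Aint f a b :=
    intervalIntegral.integral_add_adjacent_intervals (intsub hPB h0I hqI) (intsub hPB hqI h1I)
  have h01 : (∫ s in (0:ℝ)..q, max (a*s+b) 0 * (fbar f - f s)) = ∫ s in (0:ℝ)..q, (0:ℝ) := by
    apply intervalIntegral.integral_congr
    intro s hs
    rw [uIcc_of_le h0.le] at hs
    have hle : a*s + b ≤ 0 := by
      nlinarith [mul_le_mul_of_nonneg_left hs.2 ha.le]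
    simp [max_eq_right hle]
  have h02 : (∫ s in q..1, max (a*s+b) 0 * (fbar f - f s))
      = ∫ s in q..1, (a*(s*(fbar f - f s)) + b*(fbar f - f s)) := by
    apply intervalIntegral.integral_congr
    intro s hs
    rw [uIcc_of_le h1.le] at hs
    have hge : 0 ≤ a*s + b := by
      nlinarith [mul_le_mul_of_nonneg_left hs.1 ha.le]
    simp only [max_eq_left hge]
    ring
  have h03 : (∫ s in q..1, (a*(s*(fbar f - f s)) + b*(fbar f - f s)))
      = a * gg1 f q + b * gg0 f q := by
    have cg1 : ContinuousOn (fun s : ℝ => s * (fbar f - f s)) (Set.Icc 0 1) := by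
      exact continuousOn_id.mul hB
    rw [intervalIntegral.integral_add
        ((intsub cg1 hqI h1I).const_mul a)
        ((intsub hB hqI h1I).const_mul b),
      intervalIntegral.integral_const_mul, intervalIntegral.integral_const_mul]
    rfl
  rw [← hsplit, h01, h02, h03, intervalIntegral.integral_zero, zero_add]

lemma gradient_coord {L : EuclideanSpace ℝ (Fin 3) → ℝ} {θ : EuclideanSpace ℝ (Fin 3)}
    (hd : DifferentiableAt ℝ L θ) (i : Fin 3) {D : ℝ}
    (h : HasDerivAt (fun t : ℝ => L (θ + t • EuclideanSpace.single i (1:ℝ))) D 0) :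
    gradient L θ i = D := by
  have hF : HasFDerivAt L (InnerProductSpace.toDual ℝ _ (gradient L θ)) θ :=
    hd.hasGradientAt.hasFDerivAt
  have hline : HasDerivAt (fun t : ℝ => θ + t • EuclideanSpace.single i (1:ℝ))
      (EuclideanSpace.single i (1:ℝ)) 0 := by
    simpa using ((hasDerivAt_id (0:ℝ)).smul_const (EuclideanSpace.single i (1:ℝ))).const_add θ
  have hF' : HasFDerivAt L (InnerProductSpace.toDual ℝ _ (gradient L θ))
      (θ + (0:ℝ) • EuclideanSpace.single i (1:ℝ)) := by simpa using hF
  have h2 := hF'.comp_hasDerivAt 0 hline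
  have h3 := h.unique h2
  rw [h3, InnerProductSpace.toDual_apply_apply, EuclideanSpace.inner_single_right]
  simp

lemma coord_line (θ : EuclideanSpace ℝ (Fin 3)) (t : ℝ) (i j : Fin 3) :
    (θ + t • EuclideanSpace.single i (1:ℝ)) j = θ j + t * (if j = i then 1 else 0) := by
  simp [EuclideanSpace.single_apply]

lemma proj_eq (i : Fin 3) : (fun x : EuclideanSpace ℝ (Fin 3) => x i)
    = ⇑(EuclideanSpace.proj (𝕜 := ℝ) i) := by
  funext x; simp

lemma gfun_diff (θ : EuclideanSpace ℝ (Fin 3)) : DifferentiableAt ℝ gfun θ := by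
  have h0 : DifferentiableAt ℝ (fun x : EuclideanSpace ℝ (Fin 3) => x 0) θ := by
    rw [proj_eq]; exact (EuclideanSpace.proj (𝕜 := ℝ) (0 : Fin 3)).differentiableAt
  have h1 : DifferentiableAt ℝ (fun x : EuclideanSpace ℝ (Fin 3) => x 1) θ := by
    rw [proj_eq]; exact (EuclideanSpace.proj (𝕜 := ℝ) (1 : Fin 3)).differentiableAt
  exact (h0.pow 2).add (h1.pow 2)

lemma gfun_grad (θ : EuclideanSpace ℝ (Fin 3)) :
    gradient gfun θ 0 = 2 * θ 0 ∧ gradient gfun θ 1 = 2 * θ 1 ∧ gradient gfun θ 2 = 0 := by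
  have hd := gfun_diff θ
  refine ⟨gradient_coord hd 0 ?_, gradient_coord hd 1 ?_, gradient_coord hd 2 ?_⟩
  · have h : (fun t : ℝ => gfun (θ + t • EuclideanSpace.single 0 (1:ℝ)))
        = fun t => (θ 0 + t) ^ 2 + (θ 1) ^ 2 := by
      funext t
      simp [gfun, coord_line]
    rw [h]
    have := (((hasDerivAt_id (0:ℝ)).const_add (θ 0)).pow 2).add_const ((θ 1)^2)
    refine HasDerivAt.congr_deriv this ?_; symm
    simp
  · have h : (fun t : ℝ => gfun (θ + t • EuclideanSpace.single 1 (1:ℝ)))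
        = fun t => (θ 0) ^ 2 + (θ 1 + t) ^ 2 := by
      funext t
      simp [gfun, coord_line]
    rw [h]
    have := (((hasDerivAt_id (0:ℝ)).const_add (θ 1)).pow 2).const_add ((θ 0)^2)
    refine HasDerivAt.congr_deriv this ?_; symm
    simp
  · have h : (fun t : ℝ => gfun (θ + t • EuclideanSpace.single 2 (1:ℝ)))
        = fun _ => (θ 0) ^ 2 + (θ 1) ^ 2 := by
      funext t
      simp [gfun, coord_line]
    rw [h]
    exact hasDerivAt_const _ _

/-- Lemma 3.8(iv): explicit formulas for `𝔊₁(θ)` and `𝔊₃(θ)` for `θ ∈ ℳ` with breakpoint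
`q^θ = -θ₂/θ₁ ∈ (0,1)` and `θ₁ > 0`. -/
theorem stmt13
    (f : ℝ → ℝ) (hf : ContinuousOn f (Set.Icc 0 1))
    (h𝓛diff : ∀ θ : EuclideanSpace ℝ (Fin 3), 0 < |θ 0| + |θ 1| →
      DifferentiableAt ℝ (riskL f) θ)
    (𝔊 : EuclideanSpace ℝ (Fin 3) → EuclideanSpace ℝ (Fin 3))
    (h𝔊meas : Measurable 𝔊)
    (h𝔊loc : ∀ θ : EuclideanSpace ℝ (Fin 3),
      ∃ r > (0:ℝ), ∃ C : ℝ, ∀ x ∈ Metric.ball θ r, ‖𝔊 x‖ ≤ C)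
    (h𝔊 : ∀ θ : EuclideanSpace ℝ (Fin 3), 0 < |θ 0| + |θ 1| →
      𝔊 θ = gradient (riskL f) θ -
        ((‖gradient gfun θ‖ ^ 2)⁻¹ * ⟪gradient (riskL f) θ, gradient gfun θ⟫) •
          gradient gfun θ)
    (θ : EuclideanSpace ℝ (Fin 3)) (hθM : θ 0 ^ 2 + θ 1 ^ 2 = 1)
    (q : ℝ) (hq : q = -(θ 1) / θ 0) (hq01 : q ∈ Set.Ioo (0:ℝ) 1) (hθ1 : 0 < θ 0) :
    𝔊 θ 0 = 2 * θ 2 * (θ 0 * θ 1 ^ 2 * θ 2 / 12 * (1 - q) ^ 2 * (7 + 2 * q + 3 * q ^ 2)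
        + ∫ s in q..1, (fbar f - f s) * (θ 1 ^ 2 * s - θ 0 * θ 1)) ∧
    𝔊 θ 2 = 2 * θ 0 ^ 2 * θ 2 * (1 - q) ^ 3 * (1 / 12 + q / 4)
        + 2 * ∫ s in q..1, (fbar f - f s) * max (θ 0 * s + θ 1) 0 := by
  obtain ⟨hq0, hq1⟩ := hq01
  have hane : θ 0 ≠ 0 := ne_of_gt hθ1
  have haq : θ 0 * q = -(θ 1) := by rw [hq]; field_simp; try ring
  have hb : θ 1 = -(q * θ 0) := by rw [hq]; field_simp; try ring
  have hbneg : θ 1 < 0 := by nlinarith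
  have habpos : 0 < θ 0 + θ 1 := by nlinarith
  have hq0' : 0 < -(θ 1)/θ 0 := by rw [← hq]; exact hq0
  have hq1' : -(θ 1)/θ 0 < 1 := by rw [← hq]; exact hq1
  have hpos : 0 < |θ 0| + |θ 1| := by
    have h1 : 0 < |θ 0| := abs_pos.mpr hane
    have h2 := abs_nonneg (θ 1)
    linarith
  set X := fbar f - f q with hX
  -- FTC derivatives
  have hg0d : HasDerivAt (gg0 f) (-X) q := hasDerivAt_gg0 hf ⟨hq0, hq1⟩
  have hg1d : HasDerivAt (gg1 f) (-(q * X)) q := hasDerivAt_gg1 hf ⟨hq0, hq1⟩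
  -- neighbourhood conditions
  have hev0 : ∀ᶠ t in nhds (0:ℝ), 0 < θ 0 + t ∧ 0 < -(θ 1)/(θ 0 + t) ∧ -(θ 1)/(θ 0 + t) < 1 := by
    filter_upwards [Ioo_mem_nhds (by linarith : -(θ 0 + θ 1) < 0) (by norm_num : (0:ℝ) < 1)]
      with t ht
    have h1 : 0 < θ 0 + t := by linarith [ht.1]
    exact ⟨h1, div_pos (by linarith) h1, (div_lt_one h1).mpr (by linarith [ht.1])⟩
  have hev1 : ∀ᶠ t in nhds (0:ℝ), 0 < -(θ 1 + t)/θ 0 ∧ -(θ 1 + t)/θ 0 < 1 := by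
    filter_upwards [Ioo_mem_nhds (by linarith : -(θ 0 + θ 1) < 0) (by linarith : (0:ℝ) < -(θ 1))]
      with t ht
    exact ⟨div_pos (by linarith [ht.2]) hθ1, (div_lt_one hθ1).mpr (by linarith [ht.1])⟩
  -- derivative of M along e0
  have hMd0 : HasDerivAt (fun t : ℝ => Mint (θ 0 + t) (θ 1))
      ((θ 0 + θ 1)*(θ 0 - θ 1)/(2*(θ 0)^2)) 0 := by
    have hexp : HasDerivAt (fun t : ℝ => (θ 0 + t + θ 1)^2/(2*(θ 0 + t)))
        ((θ 0 + θ 1)*(θ 0 - θ 1)/(2*(θ 0)^2)) 0 := by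
      have hn := (((hasDerivAt_id (0:ℝ)).const_add (θ 0)).add_const (θ 1)).pow 2
      have hd := ((hasDerivAt_id (0:ℝ)).const_add (θ 0)).const_mul 2
      have hne : (2*(θ 0 + (0:ℝ))) ≠ 0 := by simp [hane]
      have h := hn.div hd hne
      refine HasDerivAt.congr_deriv h ?_; symm
      simp only [add_zero, id_eq, pow_one, mul_one, Nat.cast_ofNat, Pi.pow_apply]
      field_simp
      ring
    refine hexp.congr_of_eventuallyEq ?_
    filter_upwards [hev0] with t ht
    rw [Mint_eq ht.1 ht.2.1 ht.2.2]
  -- derivative of S along e0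
  have hSd0 : HasDerivAt (fun t : ℝ => Sint (θ 0 + t) (θ 1))
      ((θ 0 + θ 1)^2*(2*(θ 0) - θ 1)/(3*(θ 0)^2)) 0 := by
    have hexp : HasDerivAt (fun t : ℝ => (θ 0 + t + θ 1)^3/(3*(θ 0 + t)))
        ((θ 0 + θ 1)^2*(2*(θ 0) - θ 1)/(3*(θ 0)^2)) 0 := by
      have hn := (((hasDerivAt_id (0:ℝ)).const_add (θ 0)).add_const (θ 1)).pow 3
      have hd := ((hasDerivAt_id (0:ℝ)).const_add (θ 0)).const_mul 3
      have hne : (3*(θ 0 + (0:ℝ))) ≠ 0 := by simp [hane]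
      have h := hn.div hd hne
      refine HasDerivAt.congr_deriv h ?_; symm
      simp only [add_zero, id_eq, mul_one, Nat.cast_ofNat, Pi.pow_apply]
      field_simp
      ring
    refine hexp.congr_of_eventuallyEq ?_
    filter_upwards [hev0] with t ht
    rw [Sint_eq ht.1 ht.2.1 ht.2.2]
  -- derivative of A along e0
  have hr0 : HasDerivAt (fun t : ℝ => -(θ 1)/(θ 0 + t)) (θ 1/(θ 0)^2) 0 := by
    have h := (hasDerivAt_const (0:ℝ) (-(θ 1))).div ((hasDerivAt_id (0:ℝ)).const_add (θ 0))
      (by simpa using hane)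
    refine HasDerivAt.congr_deriv h ?_; symm
    simp only [add_zero, id_eq, mul_one, zero_mul]
    field_simp; ring
  have hr0pt : -(θ 1)/(θ 0 + (0:ℝ)) = q := by rw [hq]; norm_num
  have hg1c0 : HasDerivAt (fun t : ℝ => gg1 f (-(θ 1)/(θ 0 + t))) (-(q * X) * (θ 1/(θ 0)^2)) 0 := by
    have h' : HasDerivAt (gg1 f) (-(q * X)) (-(θ 1)/(θ 0 + (0:ℝ))) := by rw [hr0pt]; exact hg1d
    exact h'.comp 0 hr0
  have hg0c0 : HasDerivAt (fun t : ℝ => gg0 f (-(θ 1)/(θ 0 + t))) (-X * (θ 1/(θ 0)^2)) 0 := by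
    have h' : HasDerivAt (gg0 f) (-X) (-(θ 1)/(θ 0 + (0:ℝ))) := by rw [hr0pt]; exact hg0d
    exact h'.comp 0 hr0
  have hAd0 : HasDerivAt (fun t : ℝ => Aint f (θ 0 + t) (θ 1)) (gg1 f q) 0 := by
    have hm1 : HasDerivAt (fun t : ℝ => (θ 0 + t) * gg1 f (-(θ 1)/(θ 0 + t)))
        (1 * gg1 f (-(θ 1)/(θ 0 + (0:ℝ))) + (θ 0 + 0) * (-(q * X) * (θ 1/(θ 0)^2))) 0 :=
      ((hasDerivAt_id (0:ℝ)).const_add (θ 0)).mul hg1c0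
    have hm2 : HasDerivAt (fun t : ℝ => θ 1 * gg0 f (-(θ 1)/(θ 0 + t)))
        (θ 1 * (-X * (θ 1/(θ 0)^2))) 0 := hg0c0.const_mul (θ 1)
    have hsum := hm1.add hm2
    have hexp : HasDerivAt (fun t : ℝ =>
        (θ 0 + t) * gg1 f (-(θ 1)/(θ 0 + t)) + θ 1 * gg0 f (-(θ 1)/(θ 0 + t))) (gg1 f q) 0 := by
      refine HasDerivAt.congr_deriv hsum ?_; symm
      rw [hr0pt, hb]
      field_simp
      ring
    refine hexp.congr_of_eventuallyEq ?_
    filter_upwards [hev0] with t ht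
    rw [Aint_eq hf ht.1 ht.2.1 ht.2.2]
  -- derivatives along e1
  have hMd1 : HasDerivAt (fun t : ℝ => Mint (θ 0) (θ 1 + t)) ((θ 0 + θ 1)/θ 0) 0 := by
    have hexp : HasDerivAt (fun t : ℝ => (θ 0 + (θ 1 + t))^2/(2*θ 0)) ((θ 0 + θ 1)/θ 0) 0 := by
      have hn := (((hasDerivAt_id (0:ℝ)).const_add (θ 1)).const_add (θ 0)).pow 2
      have h := hn.div_const (2*θ 0)
      refine HasDerivAt.congr_deriv h ?_; symm
      simp only [add_zero, id_eq, pow_one, mul_one, Nat.cast_ofNat]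
      field_simp
      ring
    refine hexp.congr_of_eventuallyEq ?_
    filter_upwards [hev1] with t ht
    rw [Mint_eq hθ1 ht.1 ht.2]
  have hSd1 : HasDerivAt (fun t : ℝ => Sint (θ 0) (θ 1 + t)) ((θ 0 + θ 1)^2/θ 0) 0 := by
    have hexp : HasDerivAt (fun t : ℝ => (θ 0 + (θ 1 + t))^3/(3*θ 0)) ((θ 0 + θ 1)^2/θ 0) 0 := by
      have hn := (((hasDerivAt_id (0:ℝ)).const_add (θ 1)).const_add (θ 0)).pow 3
      have h := hn.div_const (3*θ 0)
      refine HasDerivAt.congr_deriv h ?_; symm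
      simp only [add_zero, id_eq, mul_one, Nat.cast_ofNat]
      field_simp
    refine hexp.congr_of_eventuallyEq ?_
    filter_upwards [hev1] with t ht
    rw [Sint_eq hθ1 ht.1 ht.2]
  have hr1 : HasDerivAt (fun t : ℝ => -(θ 1 + t)/θ 0) (-1/θ 0) 0 := by
    have h := (((hasDerivAt_id (0:ℝ)).const_add (θ 1)).neg).div_const (θ 0)
    refine HasDerivAt.congr_deriv h ?_; symm; rfl
  have hr1pt : -(θ 1 + (0:ℝ))/θ 0 = q := by rw [hq]; norm_num
  have hg1c1 : HasDerivAt (fun t : ℝ => gg1 f (-(θ 1 + t)/θ 0)) (-(q * X) * (-1/θ 0)) 0 := by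
    have h' : HasDerivAt (gg1 f) (-(q * X)) (-(θ 1 + (0:ℝ))/θ 0) := by rw [hr1pt]; exact hg1d
    exact h'.comp 0 hr1
  have hg0c1 : HasDerivAt (fun t : ℝ => gg0 f (-(θ 1 + t)/θ 0)) (-X * (-1/θ 0)) 0 := by
    have h' : HasDerivAt (gg0 f) (-X) (-(θ 1 + (0:ℝ))/θ 0) := by rw [hr1pt]; exact hg0d
    exact h'.comp 0 hr1
  have hAd1 : HasDerivAt (fun t : ℝ => Aint f (θ 0) (θ 1 + t)) (gg0 f q) 0 := by
    have hm1 : HasDerivAt (fun t : ℝ => θ 0 * gg1 f (-(θ 1 + t)/θ 0))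
        (θ 0 * (-(q * X) * (-1/θ 0))) 0 := hg1c1.const_mul (θ 0)
    have hm2 : HasDerivAt (fun t : ℝ => (θ 1 + t) * gg0 f (-(θ 1 + t)/θ 0))
        (1 * gg0 f (-(θ 1 + (0:ℝ))/θ 0) + (θ 1 + 0) * (-X * (-1/θ 0))) 0 :=
      ((hasDerivAt_id (0:ℝ)).const_add (θ 1)).mul hg0c1
    have hsum := hm1.add hm2
    have hexp : HasDerivAt (fun t : ℝ =>
        θ 0 * gg1 f (-(θ 1 + t)/θ 0) + (θ 1 + t) * gg0 f (-(θ 1 + t)/θ 0)) (gg0 f q) 0 := by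
      refine HasDerivAt.congr_deriv hsum ?_; symm
      rw [hr1pt, hb]
      field_simp
      ring
    refine hexp.congr_of_eventuallyEq ?_
    filter_upwards [hev1] with t ht
    rw [Aint_eq hf hθ1 ht.1 ht.2]
  -- line derivatives of riskL
  have hLd := h𝓛diff θ hpos
  have hline0 : HasDerivAt (fun t : ℝ => riskL f (θ + t • EuclideanSpace.single 0 (1:ℝ)))
      ((θ 2)^2*((θ 0 + θ 1)^2*(2*(θ 0) - θ 1)/(3*(θ 0)^2)
        - 2*((θ 0 + θ 1)^2/(2*(θ 0)))*((θ 0 + θ 1)*(θ 0 - θ 1)/(2*(θ 0)^2)))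
        + 2*(θ 2)*gg1 f q) 0 := by
    have hfun : (fun t : ℝ => riskL f (θ + t • EuclideanSpace.single 0 (1:ℝ)))
        = fun t => (θ 2)^2 * (Sint (θ 0 + t) (θ 1) - (Mint (θ 0 + t) (θ 1))^2)
          + 2*(θ 2) * Aint f (θ 0 + t) (θ 1) + Cc f := by
      funext t
      rw [riskL_eq f hf]
      simp [coord_line]
    rw [hfun]
    have h := (((hSd0.sub (hMd0.pow 2)).const_mul ((θ 2)^2)).add
      (hAd0.const_mul (2*(θ 2)))).add_const (Cc f)
    refine HasDerivAt.congr_deriv h ?_; symm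
    simp only [add_zero, Nat.cast_ofNat, pow_one]
    rw [Mint_eq hθ1 hq0' hq1']
    ring
  have hline1 : HasDerivAt (fun t : ℝ => riskL f (θ + t • EuclideanSpace.single 1 (1:ℝ)))
      ((θ 2)^2*((θ 0 + θ 1)^2/θ 0
        - 2*((θ 0 + θ 1)^2/(2*(θ 0)))*((θ 0 + θ 1)/θ 0))
        + 2*(θ 2)*gg0 f q) 0 := by
    have hfun : (fun t : ℝ => riskL f (θ + t • EuclideanSpace.single 1 (1:ℝ)))
        = fun t => (θ 2)^2 * (Sint (θ 0) (θ 1 + t) - (Mint (θ 0) (θ 1 + t))^2)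
          + 2*(θ 2) * Aint f (θ 0) (θ 1 + t) + Cc f := by
      funext t
      rw [riskL_eq f hf]
      simp [coord_line]
    rw [hfun]
    have h := (((hSd1.sub (hMd1.pow 2)).const_mul ((θ 2)^2)).add
      (hAd1.const_mul (2*(θ 2)))).add_const (Cc f)
    refine HasDerivAt.congr_deriv h ?_; symm
    simp only [add_zero, Nat.cast_ofNat, pow_one]
    rw [Mint_eq hθ1 hq0' hq1']
    ring
  have hline2 : HasDerivAt (fun t : ℝ => riskL f (θ + t • EuclideanSpace.single 2 (1:ℝ)))
      (2*(θ 2)*((θ 0 + θ 1)^3/(3*(θ 0)) - ((θ 0 + θ 1)^2/(2*(θ 0)))^2)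
        + 2*(θ 0 * gg1 f q + θ 1 * gg0 f q)) 0 := by
    have hfun : (fun t : ℝ => riskL f (θ + t • EuclideanSpace.single 2 (1:ℝ)))
        = fun t => (θ 2 + t)^2 * (Sint (θ 0) (θ 1) - (Mint (θ 0) (θ 1))^2)
          + 2*(θ 2 + t) * Aint f (θ 0) (θ 1) + Cc f := by
      funext t
      rw [riskL_eq f hf]
      simp [coord_line]
    rw [hfun]
    have h1 := ((hasDerivAt_id (0:ℝ)).const_add (θ 2)).pow 2
    have h2 := ((hasDerivAt_id (0:ℝ)).const_add (θ 2)).const_mul 2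
    have h := (((h1.mul_const (Sint (θ 0) (θ 1) - (Mint (θ 0) (θ 1))^2)).add
      (h2.mul_const (Aint f (θ 0) (θ 1)))).add_const (Cc f))
    refine HasDerivAt.congr_deriv h ?_; symm
    simp only [add_zero, Nat.cast_ofNat, pow_one, id_eq, mul_one]
    rw [Sint_eq hθ1 hq0' hq1', Mint_eq hθ1 hq0' hq1', Aint_eq hf hθ1 hq0' hq1', ← hq]
    ring
  -- gradient coordinates
  have hD0 := gradient_coord hLd 0 hline0
  have hD1 := gradient_coord hLd 1 hline1
  have hD2 := gradient_coord hLd 2 hline2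
  obtain ⟨hg0, hg1, hg2⟩ := gfun_grad θ
  have hnormsq : ‖gradient gfun θ‖^2 = 4 := by
    rw [← real_inner_self_eq_norm_sq]
    simp only [PiLp.inner_apply, RCLike.inner_apply, conj_trivial, Fin.sum_univ_three]
    rw [hg0, hg1, hg2]
    linear_combination 4 * hθM
  have hinner : ⟪gradient (riskL f) θ, gradient gfun θ⟫
      = gradient (riskL f) θ 0 * (2 * θ 0) + gradient (riskL f) θ 1 * (2 * θ 1) := by
    simp only [PiLp.inner_apply, RCLike.inner_apply, conj_trivial, Fin.sum_univ_three]
    rw [hg0, hg1, hg2]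
    ring
  -- integral identities
  have hB : ContinuousOn (fun s : ℝ => fbar f - f s) (Set.Icc 0 1) := continuousOn_const.sub hf
  have cg1 : ContinuousOn (fun s : ℝ => s * (fbar f - f s)) (Set.Icc 0 1) :=
    continuousOn_id.mul hB
  have hqI : q ∈ Set.Icc (0:ℝ) 1 := ⟨hq0.le, hq1.le⟩
  have h1I : (1:ℝ) ∈ Set.Icc (0:ℝ) 1 := by norm_num
  have hI0 : (∫ s in q..1, (fbar f - f s) * ((θ 1)^2 * s - θ 0 * θ 1))
      = (θ 1)^2 * gg1 f q - θ 0 * θ 1 * gg0 f q := by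
    have hcongr : (∫ s in q..1, (fbar f - f s) * ((θ 1)^2 * s - θ 0 * θ 1))
        = ∫ s in q..1, ((θ 1)^2 * (s * (fbar f - f s)) - (θ 0 * θ 1) * (fbar f - f s)) :=
      intervalIntegral.integral_congr (fun s _ => by ring)
    rw [hcongr, intervalIntegral.integral_sub ((intsub cg1 hqI h1I).const_mul _)
        ((intsub hB hqI h1I).const_mul _),
      intervalIntegral.integral_const_mul, intervalIntegral.integral_const_mul]
    rfl
  have hI2 : (∫ s in q..1, (fbar f - f s) * max (θ 0 * s + θ 1) 0)
      = θ 0 * gg1 f q + θ 1 * gg0 f q := by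
    have hcongr : (∫ s in q..1, (fbar f - f s) * max (θ 0 * s + θ 1) 0)
        = ∫ s in q..1, (θ 0 * (s * (fbar f - f s)) + θ 1 * (fbar f - f s)) := by
      apply intervalIntegral.integral_congr
      intro s hs
      rw [uIcc_of_le hq1.le] at hs
      have hge : 0 ≤ θ 0 * s + θ 1 := by
        nlinarith [mul_le_mul_of_nonneg_left hs.1 hθ1.le]
      simp only [max_eq_left hge]
      ring
    rw [hcongr, intervalIntegral.integral_add ((intsub cg1 hqI h1I).const_mul _)
        ((intsub hB hqI h1I).const_mul _),
      intervalIntegral.integral_const_mul, intervalIntegral.integral_const_mul]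
    rfl
  -- conclusion
  rw [h𝔊 θ hpos]
  constructor
  · have hcoord : (gradient (riskL f) θ -
        ((‖gradient gfun θ‖ ^ 2)⁻¹ * ⟪gradient (riskL f) θ, gradient gfun θ⟫) •
          gradient gfun θ) 0 = gradient (riskL f) θ 0
        - ((‖gradient gfun θ‖ ^ 2)⁻¹ * ⟪gradient (riskL f) θ, gradient gfun θ⟫)
          * gradient gfun θ 0 := by
      simp [PiLp.sub_apply, PiLp.smul_apply, smul_eq_mul]
    rw [hcoord, hnormsq, hinner, hg0, hD0, hD1, hI0]
    have hkey : ∀ U V : ℝ, U - (4⁻¹ * (U * (2 * θ 0) + V * (2 * θ 1))) * (2 * θ 0)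
        = θ 1 * (θ 1 * U - θ 0 * V) := by
      intro U V
      linear_combination (-U) * hθM
    rw [hkey]
    rw [hb]
    field_simp
    ring
  · have hcoord : (gradient (riskL f) θ -
        ((‖gradient gfun θ‖ ^ 2)⁻¹ * ⟪gradient (riskL f) θ, gradient gfun θ⟫) •
          gradient gfun θ) 2 = gradient (riskL f) θ 2
        - ((‖gradient gfun θ‖ ^ 2)⁻¹ * ⟪gradient (riskL f) θ, gradient gfun θ⟫)
          * gradient gfun θ 2 := by
      simp [PiLp.sub_apply, PiLp.smul_apply, smul_eq_mul]
    rw [hcoord, hnormsq, hinner, hg2, hD2, hI2]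
    rw [hb]
    field_simp
    ring
end
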